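/- arXiv:2303.16130 — 2 statements merged into one kernel-verified Lean document; each statement's English description precedes it below -/
import Mathlib

section
/- Let 𝔾 be a grid diagram of size m, let x and y be grid states of 𝔾, and let r ∈ Rect(x,y). Then M(x) − M(y) = 1 − 2·#(r ∩ 𝕆) + 2·#(Int(r) ∩ x) and A(x) − A(y) = #(r ∩ 𝕏) − #(r ∩ 𝕆). -/
/-!
Grid diagrams, the filtered grid complex over `F₂ = ZMod 2`, its Alexander
filtration, Maslov grading, canonical (Legendrian) grid states, the associated
spectral sequence, and the grid moves (commutation, X:SE/X:NW (de)stabilization,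
X swap, O swap, birth).
-/

noncomputable section

open Finset

/-- A grid diagram of size `m`: two permutations recording the rows of the
`O`-markers and the `X`-markers in each column, with no marker collisions. -/
structure GridDiagram (m : ℕ) where
  σO : Equiv.Perm (Fin m)
  σX : Equiv.Perm (Fin m)
  ne : ∀ i, σO i ≠ σX i

namespace Grid

variable {m m' : ℕ}

/-- `I(P,Q)`: the number of pairs `(p, q) ∈ P × Q` with `p₁ < q₁` and `p₂ < q₂`. -/
def Icount (P Q : Finset (ℚ × ℚ)) : ℕ :=
  ((P ×ˢ Q).filter fun pq => pq.1.1 < pq.2.1 ∧ pq.1.2 < pq.2.2).card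

/-- `J(P,Q) = (I(P,Q) + I(Q,P))/2`. -/
def Jcount (P Q : Finset (ℚ × ℚ)) : ℚ := ((Icount P Q : ℚ) + (Icount Q P : ℚ)) / 2

/-- The set of points of a grid state. -/
def ptSet (x : Equiv.Perm (Fin m)) : Finset (ℚ × ℚ) :=
  Finset.univ.image fun i => ((i.val : ℚ), ((x i).val : ℚ))

/-- The set of `O`-markers, as points in the plane. -/
def Omark (G : GridDiagram m) : Finset (ℚ × ℚ) :=
  Finset.univ.image fun i => ((i.val : ℚ) + 1/2, ((G.σO i).val : ℚ) + 1/2)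

/-- The set of `X`-markers, as points in the plane. -/
def Xmark (G : GridDiagram m) : Finset (ℚ × ℚ) :=
  Finset.univ.image fun i => ((i.val : ℚ) + 1/2, ((G.σX i).val : ℚ) + 1/2)

/-- The Maslov function `M = M_𝕆`. -/
def MaslovO (G : GridDiagram m) (x : Equiv.Perm (Fin m)) : ℚ :=
  Jcount (ptSet x) (ptSet x) - 2 * Jcount (ptSet x) (Omark G)
    + Jcount (Omark G) (Omark G) + 1

/-- The function `M_𝕏`. -/
def MaslovX (G : GridDiagram m) (x : Equiv.Perm (Fin m)) : ℚ :=
  Jcount (ptSet x) (ptSet x) - 2 * Jcount (ptSet x) (Xmark G)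
    + Jcount (Xmark G) (Xmark G) + 1

/-- The number `ℓ` of components of the link represented by `G`, i.e. the
number of cycles of `σX⁻¹ ∘ σO` (which has no fixed points). -/
def numComp (G : GridDiagram m) : ℕ := (G.σX⁻¹ * G.σO).cycleType.card

/-- The Alexander function `A(x) = ½(M_𝕆(x) − M_𝕏(x)) − (m − ℓ)/2`. -/
def Alex (G : GridDiagram m) (x : Equiv.Perm (Fin m)) : ℚ :=
  (MaslovO G x - MaslovX G x) / 2 - ((m : ℚ) - (numComp G : ℚ)) / 2

/-- The half-open cyclic interval `[u, v)` in `Fin m`. -/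
def cycInt (u v : Fin m) : Finset (Fin m) :=
  Finset.univ.filter fun w => (w - u).val < (v - u).val

/-- The set of cells of the toroidal rectangle `[i, j) × [a, b)`. -/
def rectCells (i j a b : Fin m) : Finset (Fin m × Fin m) := cycInt i j ×ˢ cycInt a b

/-- The set `Rect(x, y)` of (cell sets of) toroidal rectangles from `x` to `y`. -/
def Rect (x y : Equiv.Perm (Fin m)) : Set (Finset (Fin m × Fin m)) :=
  { r | ∃ i j : Fin m, i ≠ j ∧ y = x * Equiv.swap i j ∧
      (r = rectCells i j (x i) (x j) ∨ r = rectCells j i (x j) (x i)) }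

/-- The cyclically previous index. -/
def prev (k : Fin m) : Fin m := (finRotate m)⁻¹ k

/-- The points of the grid state `x` lying in the interior of the region with
cell set `r`: a lattice point is interior iff all four adjacent cells are in `r`. -/
def intPts (x : Equiv.Perm (Fin m)) (r : Finset (Fin m × Fin m)) : Finset (Fin m) :=
  Finset.univ.filter fun k =>
    (k, x k) ∈ r ∧ (prev k, x k) ∈ r ∧ (k, prev (x k)) ∈ r ∧ (prev k, prev (x k)) ∈ r

/-- The set `Rect°(x, y)` of empty rectangles from `x` to `y`. -/
def ERect (x y : Equiv.Perm (Fin m)) : Set (Finset (Fin m × Fin m)) :=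
  { r | r ∈ Rect x y ∧ intPts x r = ∅ }

/-- The number of `O`-markers in the region `r`, `#(r ∩ 𝕆)`. -/
def countO (G : GridDiagram m) (r : Finset (Fin m × Fin m)) : ℕ :=
  (Finset.univ.filter fun c : Fin m => (c, G.σO c) ∈ r).card

/-- The number of `X`-markers in the region `r`, `#(r ∩ 𝕏)`. -/
def countX (G : GridDiagram m) (r : Finset (Fin m × Fin m)) : ℕ :=
  (Finset.univ.filter fun c : Fin m => (c, G.σX c) ∈ r).card

/-- The underlying `F₂`-vector space of the filtered grid complex `𝒢̃C(𝔾)`,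
with basis the grid states. -/
abbrev GC (m : ℕ) := Equiv.Perm (Fin m) →₀ ZMod 2

/-- The number of empty rectangles from `x` to `y` containing no `O`-marker. -/
def countDRect (G : GridDiagram m) (x y : Equiv.Perm (Fin m)) : ℕ :=
  Nat.card {r : Finset (Fin m × Fin m) // r ∈ ERect x y ∧ countO G r = 0}

/-- The differential `∂̃` of the filtered grid complex, counting empty
rectangles containing no `O`-marker. -/
def delta (G : GridDiagram m) : GC m →ₗ[ZMod 2] GC m :=
  Finsupp.lsum (ZMod 2) fun x => LinearMap.toSpanSingleton (ZMod 2) (GC m)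
    (∑ y : Equiv.Perm (Fin m), (countDRect G x y : ZMod 2) • Finsupp.single y 1)

/-- The Alexander filtration: `F_j` is spanned by the grid states of Alexander
level at most `j`. -/
def Filt (G : GridDiagram m) (j : ℚ) : Submodule (ZMod 2) (GC m) :=
  Submodule.span (ZMod 2)
    {f | ∃ x : Equiv.Perm (Fin m), Alex G x ≤ j ∧ f = Finsupp.single x 1}

/-- The Maslov-homogeneous part of degree `d` of the grid complex. -/
def MaslovPart (G : GridDiagram m) (d : ℚ) : Submodule (ZMod 2) (GC m) :=
  Submodule.span (ZMod 2)
    {f | ∃ x : Equiv.Perm (Fin m), MaslovO G x = d ∧ f = Finsupp.single x 1}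

/-- The canonical grid state `x⁻(𝔾)`, at the lower-left corners of the `X`'s. -/
def xminus (G : GridDiagram m) : Equiv.Perm (Fin m) := G.σX

/-- The canonical grid state `x⁺(𝔾)`, at the upper-right corners of the `X`'s:
`x⁺(i) = σX(i-1) + 1`. -/
def xplus (G : GridDiagram m) : Equiv.Perm (Fin m) :=
  finRotate m * G.σX * (finRotate m)⁻¹

/-- The numerator of `Z^r_p` for the grid complex. -/
def ZNg (G : GridDiagram m) (r : ℕ) (p : ℚ) : Submodule (ZMod 2) (GC m) :=
  (Filt G p ⊓ Submodule.comap (delta G) (Filt G (p - r))) ⊔ Filt G (p - 1)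

/-- The numerator of `B^r_p` for the grid complex. -/
def BNg (G : GridDiagram m) (r : ℕ) (p : ℚ) : Submodule (ZMod 2) (GC m) :=
  (Filt G p ⊓ Submodule.map (delta G) (Filt G (p + r - 1))) ⊔ Filt G (p - 1)

/-- The page `E^r_p` of the spectral sequence of the filtered grid complex. -/
abbrev EPageG (G : GridDiagram m) (r : ℕ) (p : ℚ) :=
  ↥(ZNg G r p) ⧸
    (Submodule.comap (ZNg G r p).subtype (BNg G r p) : Submodule (ZMod 2) ↥(ZNg G r p))

/-- The class `[f]^r ∈ E^r_p`. -/
def clsG (G : GridDiagram m) (r : ℕ) (p : ℚ) (f : GC m)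
    (hf : f ∈ Filt G p ⊓ Submodule.comap (delta G) (Filt G (p - r))) : EPageG G r p :=
  Submodule.Quotient.mk ⟨f, Submodule.mem_sup_left hf⟩

/-- `x` survives to the `i`-th page with `d^i`-obstruction vanishing:
there is a correction term `z ∈ F_{A(x)-1}` with `∂̃(x + z) ∈ F_{A(x)-i}`. -/
def survives (G : GridDiagram m) (x : Equiv.Perm (Fin m)) (i : ℕ) : Prop :=
  ∃ z ∈ Filt G (Alex G x - 1), delta G (Finsupp.single x 1 + z) ∈ Filt G (Alex G x - i)

/-- The invariant `n(𝔾, x) ∈ ℕ∞`: the smallest `i ≥ 1` such that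
`d^i [x]^i ≠ 0`, and `∞` if no such `i` exists. -/
def nInv (G : GridDiagram m) (x : Equiv.Perm (Fin m)) : ℕ∞ :=
  sInf {n : ℕ∞ | ∃ k : ℕ, n = (k : ℕ∞) ∧ 1 ≤ k ∧ ¬ survives G x (k + 1)}

/-- The invariant `n⁺(𝔾)`. -/
def nPlus (G : GridDiagram m) : ℕ∞ := nInv G (xplus G)

/-- The invariant `n⁻(𝔾)`. -/
def nMinus (G : GridDiagram m) : ℕ∞ := nInv G (xminus G)

/-- `w` is a chain-level representative of the class `λ̃_i = [x]^i` on the `i`-th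
page: `w` lies in `F_{A(x)} ∩ ∂̃⁻¹(F_{A(x)-i})` and agrees with `x` modulo
`F_{A(x)-1}`. -/
def IsLambdaRep (G : GridDiagram m) (x : Equiv.Perm (Fin m)) (i : ℕ) (w : GC m) : Prop :=
  w ∈ Filt G (Alex G x) ⊓ Submodule.comap (delta G) (Filt G (Alex G x - i)) ∧
    w - Finsupp.single x 1 ∈ Filt G (Alex G x - 1)

/-- The class `λ̃_i(𝔾) = [x]^i ∈ E^i_{A(x)}` vanishes. -/
def LambdaVanishes (G : GridDiagram m) (x : Equiv.Perm (Fin m)) (i : ℕ) : Prop :=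
  ∃ w : GC m, IsLambdaRep G x i w ∧ w ∈ BNg G i (Alex G x)

/-- The map induced by `Φ` on the `i`-th pages carries the class `[x]^i` at
filtration level `p` to the class `[x']^i` at filtration level `p'`. -/
def MapsLambda (G : GridDiagram m) (G' : GridDiagram m') (Φ : GC m →ₗ[ZMod 2] GC m')
    (i : ℕ) (p p' : ℚ) (x : Equiv.Perm (Fin m)) (x' : Equiv.Perm (Fin m')) : Prop :=
  ∀ w : GC m, w ∈ Filt G p ⊓ Submodule.comap (delta G) (Filt G (p - i)) →
    w - Finsupp.single x 1 ∈ Filt G (p - 1) →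
    ∃ (w' : GC m') (hw' : w' ∈ Filt G' p' ⊓ Submodule.comap (delta G') (Filt G' (p' - i))),
      w' - Finsupp.single x' 1 ∈ Filt G' (p' - 1) ∧
      ∃ hm : Φ w ∈ ZNg G' i p',
        (Submodule.Quotient.mk ⟨Φ w, hm⟩ : EPageG G' i p') = clsG G' i p' w' hw'

/-! ### Grid moves -/

/-- The closed cyclic interval `[u, v]` in `Fin m`. -/
def ccInt (u v : Fin m) : Finset (Fin m) :=
  Finset.univ.filter fun w => (w - u).val ≤ (v - u).val

/-- The open cyclic interval `(u, v)` in `Fin m`. -/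
def ooInt (u v : Fin m) : Finset (Fin m) :=
  Finset.univ.filter fun w => 0 < (w - u).val ∧ (w - u).val < (v - u).val

/-- The closed arcs `[u₁, v₁]` and `[u₂, v₂]` are disjoint, or one is contained
in the interior of the other. -/
def ArcsOK (u₁ v₁ u₂ v₂ : Fin m) : Prop :=
  ccInt u₁ v₁ ∩ ccInt u₂ v₂ = ∅ ∨ ccInt u₁ v₁ ⊆ ooInt u₂ v₂ ∨ ccInt u₂ v₂ ⊆ ooInt u₁ v₁

/-- Some choice of arcs joining `a₁` to `b₁` and `a₂` to `b₂` is disjoint or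
nested (one contained in the interior of the other). -/
def Commutable (a₁ b₁ a₂ b₂ : Fin m) : Prop :=
  ArcsOK a₁ b₁ a₂ b₂ ∨ ArcsOK a₁ b₁ b₂ a₂ ∨ ArcsOK b₁ a₁ a₂ b₂ ∨ ArcsOK b₁ a₁ b₂ a₂

/-- `G₂` is obtained from `G₁` by commuting two adjacent columns. -/
def ColCommutation (G₁ G₂ : GridDiagram m) : Prop :=
  ∃ c c' : Fin m, c'.val = (c.val + 1) % m ∧ c ≠ c' ∧
    G₂.σO = G₁.σO * Equiv.swap c c' ∧ G₂.σX = G₁.σX * Equiv.swap c c' ∧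
    Commutable (G₁.σO c) (G₁.σX c) (G₁.σO c') (G₁.σX c')

/-- `G₂` is obtained from `G₁` by commuting two adjacent rows. -/
def RowCommutation (G₁ G₂ : GridDiagram m) : Prop :=
  ∃ h h' : Fin m, h'.val = (h.val + 1) % m ∧ h ≠ h' ∧
    G₂.σO = Equiv.swap h h' * G₁.σO ∧ G₂.σX = Equiv.swap h h' * G₁.σX ∧
    Commutable (G₁.σO⁻¹ h) (G₁.σX⁻¹ h) (G₁.σO⁻¹ h') (G₁.σX⁻¹ h')

/-- `G₁` and `G₂` differ by a commutation move. -/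
def Commutation (G₁ G₂ : GridDiagram m) : Prop :=
  ColCommutation G₁ G₂ ∨ RowCommutation G₁ G₂

/-- `G₁` is obtained from `G₂` by a stabilization of type `X:SE` at the
`X`-marker in column `c`: the row and column of that `X` are split in two, and
the new `2×2` block (columns `c, c+1`, rows `h, h+1` where `h = σX c`) carries
an `O` in its northwest cell, `X`'s in its northeast and southwest cells, and
its southeast cell is empty; all other markers are unchanged. -/
def StabXSE (G₁ : GridDiagram (m + 1)) (G₂ : GridDiagram m) : Prop :=
  ∃ c : Fin m,
    (∀ i : Fin m, G₁.σO (c.castSucc.succAbove i) = (G₂.σX c).succ.succAbove (G₂.σO i)) ∧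
    G₁.σO c.castSucc = (G₂.σX c).succ ∧
    (∀ i : Fin m, i ≠ c →
      G₁.σX (c.castSucc.succAbove i) = (G₂.σX c).succ.succAbove (G₂.σX i)) ∧
    G₁.σX c.castSucc = (G₂.σX c).castSucc ∧
    G₁.σX c.succ = (G₂.σX c).succ

/-- `G₁` is obtained from `G₂` by a stabilization of type `X:NW`: the new `2×2`
block carries an `O` in its southeast cell, `X`'s in its northeast and southwest
cells, and its northwest cell is empty. -/
def StabXNW (G₁ : GridDiagram (m + 1)) (G₂ : GridDiagram m) : Prop :=
  ∃ c : Fin m,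
    (∀ i : Fin m, G₁.σO (c.succ.succAbove i) = (G₂.σX c).castSucc.succAbove (G₂.σO i)) ∧
    G₁.σO c.succ = (G₂.σX c).castSucc ∧
    (∀ i : Fin m, i ≠ c →
      G₁.σX (c.succ.succAbove i) = (G₂.σX c).castSucc.succAbove (G₂.σX i)) ∧
    G₁.σX c.castSucc = (G₂.σX c).castSucc ∧
    G₁.σX c.succ = (G₂.σX c).succ

/-- `Gp` is obtained from `Gm` by an X swap (pinch move): the diagrams agree
except in two adjacent rows `h` (lower) and `h' = h+1` (upper), whose four
markers lie in columns `c₁ < c₂ < c₃ < c₄` with at least one column strictly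
between `c₂` and `c₃`; both diagrams have `O`'s in the upper row in column `c₁`
and in the lower row in column `c₄`; in `Gm` the `X`'s are at `(c₂, h')` and
`(c₃, h)`, while in `Gp` they are at `(c₃, h')` and `(c₂, h)`. -/
def XSwap (Gp Gm : GridDiagram m) : Prop :=
  ∃ h h' c₁ c₂ c₃ c₄ : Fin m,
    h'.val = h.val + 1 ∧
    c₁ < c₂ ∧ c₂ < c₃ ∧ c₃ < c₄ ∧ c₂.val + 1 < c₃.val ∧
    Gp.σO = Gm.σO ∧
    Gm.σO c₁ = h' ∧ Gm.σO c₄ = h ∧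
    Gm.σX c₂ = h' ∧ Gm.σX c₃ = h ∧
    Gp.σX = Gm.σX * Equiv.swap c₂ c₃

/-- `Gp` is obtained from `Gm` by an O swap (pinch move): as in `XSwap`, with
the roles of the `X`- and `O`-markers exchanged. -/
def OSwap (Gp Gm : GridDiagram m) : Prop :=
  ∃ h h' c₁ c₂ c₃ c₄ : Fin m,
    h'.val = h.val + 1 ∧
    c₁ < c₂ ∧ c₂ < c₃ ∧ c₃ < c₄ ∧ c₂.val + 1 < c₃.val ∧
    Gp.σX = Gm.σX ∧
    Gm.σX c₁ = h' ∧ Gm.σX c₄ = h ∧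
    Gm.σO c₂ = h' ∧ Gm.σO c₃ = h ∧
    Gp.σO = Gm.σO * Equiv.swap c₂ c₃

/-- The column re-indexing for a birth move at column `c`: two new columns are
inserted immediately to the right of column `c`. -/
def insCol (c i : Fin m) : Fin (m + 2) :=
  if i.val ≤ c.val then ⟨i.val, by have := i.isLt; omega⟩
  else ⟨i.val + 2, by have := i.isLt; omega⟩

/-- The row re-indexing for a birth move at the `O` in row `g`: two new rows are
inserted immediately below row `g`. -/
def insRow (g j : Fin m) : Fin (m + 2) :=
  if j.val < g.val then ⟨j.val, by have := j.isLt; omega⟩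
  else ⟨j.val + 2, by have := j.isLt; omega⟩

/-- `Gp` is obtained from `Gm` by a birth move: directly to the bottom-right of
the `O`-marker at `(c, g)` (`g = σO c`), two new adjacent columns `c+1, c+2` and
two new adjacent rows `g, g+1` are inserted, whose new `2×2` block carries
`O`-markers in its northwest `(c+1, g+1)` and southeast `(c+2, g)` cells and
`X`-markers in its northeast `(c+2, g+1)` and southwest `(c+1, g)` cells; all
other markers are unchanged. -/
def Birth (Gp : GridDiagram (m + 2)) (Gm : GridDiagram m) : Prop :=
  ∃ c : Fin m,
    (∀ i : Fin m, Gp.σO (insCol c i) = insRow (Gm.σO c) (Gm.σO i)) ∧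
    Gp.σO ⟨c.val + 1, by have := c.isLt; omega⟩ =
      ⟨(Gm.σO c).val + 1, by have := (Gm.σO c).isLt; omega⟩ ∧
    Gp.σO ⟨c.val + 2, by have := c.isLt; omega⟩ =
      ⟨(Gm.σO c).val, by have := (Gm.σO c).isLt; omega⟩ ∧
    (∀ i : Fin m, Gp.σX (insCol c i) = insRow (Gm.σO c) (Gm.σX i)) ∧
    Gp.σX ⟨c.val + 1, by have := c.isLt; omega⟩ =
      ⟨(Gm.σO c).val, by have := (Gm.σO c).isLt; omega⟩ ∧
    Gp.σX ⟨c.val + 2, by have := c.isLt; omega⟩ =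
      ⟨(Gm.σO c).val + 1, by have := (Gm.σO c).isLt; omega⟩

/-- A finite sequence of commutations and `X:SE`/`X:NW` (de)stabilizations
joining two grid diagrams (so that they represent the same Legendrian link). -/
inductive LegSeq : (Σ m : ℕ, GridDiagram m) → (Σ m : ℕ, GridDiagram m) → Prop
  | refl (X : Σ m : ℕ, GridDiagram m) : LegSeq X X
  | comm {m : ℕ} {G₁ G₂ : GridDiagram m} {Y : Σ m : ℕ, GridDiagram m}
      (h : Commutation G₁ G₂) (tail : LegSeq ⟨m, G₂⟩ Y) : LegSeq ⟨m, G₁⟩ Y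
  | stab {m : ℕ} {G₁ : GridDiagram (m + 1)} {G₂ : GridDiagram m} {Y : Σ m : ℕ, GridDiagram m}
      (h : StabXSE G₁ G₂ ∨ StabXNW G₁ G₂) (tail : LegSeq ⟨m + 1, G₁⟩ Y) :
      LegSeq ⟨m, G₂⟩ Y
  | destab {m : ℕ} {G₁ : GridDiagram (m + 1)} {G₂ : GridDiagram m} {Y : Σ m : ℕ, GridDiagram m}
      (h : StabXSE G₁ G₂ ∨ StabXNW G₁ G₂) (tail : LegSeq ⟨m, G₂⟩ Y) :
      LegSeq ⟨m + 1, G₁⟩ Y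

/-- `CobSeq X Y P B`: a finite sequence of moves from the grid diagram `X`
(playing the role of `𝔾₊`) down to `Y` (playing the role of `𝔾₋`), each step
being a commutation, an `X:SE`/`X:NW` stabilization or destabilization, an
X swap or O swap (a pinch), or a birth, with `P` pinch steps and `B` birth
steps; this is the combinatorial counterpart of a decomposable Lagrangian
cobordism from the Legendrian link of `Y` to that of `X`. -/
inductive CobSeq :
    (Σ m : ℕ, GridDiagram m) → (Σ m : ℕ, GridDiagram m) → ℕ → ℕ → Prop
  | refl (X : Σ m : ℕ, GridDiagram m) : CobSeq X X 0 0
  | comm {m : ℕ} {G₁ G₂ : GridDiagram m} {Y : Σ m : ℕ, GridDiagram m} {P B : ℕ}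
      (h : Commutation G₁ G₂) (tail : CobSeq ⟨m, G₂⟩ Y P B) : CobSeq ⟨m, G₁⟩ Y P B
  | stab {m : ℕ} {G₁ : GridDiagram (m + 1)} {G₂ : GridDiagram m}
      {Y : Σ m : ℕ, GridDiagram m} {P B : ℕ}
      (h : StabXSE G₁ G₂ ∨ StabXNW G₁ G₂) (tail : CobSeq ⟨m + 1, G₁⟩ Y P B) :
      CobSeq ⟨m, G₂⟩ Y P B
  | destab {m : ℕ} {G₁ : GridDiagram (m + 1)} {G₂ : GridDiagram m}
      {Y : Σ m : ℕ, GridDiagram m} {P B : ℕ}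
      (h : StabXSE G₁ G₂ ∨ StabXNW G₁ G₂) (tail : CobSeq ⟨m, G₂⟩ Y P B) :
      CobSeq ⟨m + 1, G₁⟩ Y P B
  | xswap {m : ℕ} {Gp Gm : GridDiagram m} {Y : Σ m : ℕ, GridDiagram m} {P B : ℕ}
      (h : XSwap Gp Gm) (tail : CobSeq ⟨m, Gm⟩ Y P B) : CobSeq ⟨m, Gp⟩ Y (P + 1) B
  | oswap {m : ℕ} {Gp Gm : GridDiagram m} {Y : Σ m : ℕ, GridDiagram m} {P B : ℕ}
      (h : OSwap Gp Gm) (tail : CobSeq ⟨m, Gm⟩ Y P B) : CobSeq ⟨m, Gp⟩ Y (P + 1) B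
  | birth {m : ℕ} {Gp : GridDiagram (m + 2)} {Gm : GridDiagram m}
      {Y : Σ m : ℕ, GridDiagram m} {P B : ℕ}
      (h : Birth Gp Gm) (tail : CobSeq ⟨m, Gm⟩ Y P B) : CobSeq ⟨m + 2, Gp⟩ Y P (B + 1)

end Grid


namespace Stmt9

open Grid Finset

variable {m : ℕ}

/-- Rational indicator of a decidable proposition. -/
def ind (P : Prop) [Decidable P] : ℚ := if P then 1 else 0

lemma ind_eq_one {P : Prop} [Decidable P] (h : P) : ind P = 1 := if_pos h

lemma ind_eq_zero {P : Prop} [Decidable P] (h : ¬P) : ind P = 0 := if_neg h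

lemma ind_congr {P Q : Prop} [Decidable P] [Decidable Q] (h : P ↔ Q) : ind P = ind Q := by
  simp only [ind]
  split_ifs with h1 h2 <;> first | rfl | tauto

lemma ind_and (P Q : Prop) [Decidable P] [Decidable Q] : ind (P ∧ Q) = ind P * ind Q := by
  simp only [ind]
  split_ifs <;> first | (exfalso; tauto) | norm_num

lemma ind_lt_le (p q : Fin m) : ind (p < q) = 1 - ind (q ≤ p) := by
  rcases lt_or_ge p q with h | h
  · rw [ind_eq_one h, ind_eq_zero (not_le.mpr h)]; norm_num
  · rw [ind_eq_zero (not_lt.mpr h), ind_eq_one h]; norm_num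

lemma ind_le_swap {p q : Fin m} (h : p ≠ q) : ind (p ≤ q) = 1 - ind (q ≤ p) := by
  rcases h.lt_or_gt with h' | h'
  · rw [ind_eq_one h'.le, ind_eq_zero (not_le.mpr h')]; norm_num
  · rw [ind_eq_zero (not_le.mpr h'), ind_eq_one h'.le]; norm_num

lemma ind_lt_lt {p q : Fin m} (h : p ≠ q) : ind (p < q) = 1 - ind (q < p) := by
  rcases h.lt_or_gt with h' | h'
  · rw [ind_eq_one h', ind_eq_zero (asymm h')]; norm_num
  · rw [ind_eq_zero (asymm h'), ind_eq_one h']; norm_num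

lemma lt_half {k c : ℕ} : (k : ℚ) < (c : ℚ) + 1/2 ↔ k ≤ c := by
  constructor
  · intro h
    by_contra hc
    push_neg at hc
    have : (c : ℚ) + 1 ≤ (k : ℚ) := by exact_mod_cast hc
    linarith
  · intro h
    have : (k : ℚ) ≤ (c : ℚ) := by exact_mod_cast h
    linarith

lemma half_lt {c k : ℕ} : (c : ℚ) + 1/2 < (k : ℚ) ↔ c < k := by
  constructor
  · intro h
    by_contra hc
    push_neg at hc
    have : (k : ℚ) ≤ (c : ℚ) := by exact_mod_cast hc
    linarith
  · intro h
    have : (c : ℚ) + 1 ≤ (k : ℚ) := by exact_mod_cast h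
    linarith

lemma half_lt_half {c d : ℕ} : (c : ℚ) + 1/2 < (d : ℚ) + 1/2 ↔ c < d := by
  constructor <;> intro h
  · exact_mod_cast (by linarith : (c : ℚ) < (d : ℚ))
  · have : (c : ℚ) < (d : ℚ) := by exact_mod_cast h
    linarith

lemma sub_val (u w : Fin m) :
    (w - u).val = if u.val ≤ w.val then w.val - u.val else w.val + m - u.val := by
  have hu := u.isLt
  have hw := w.isLt
  rw [Fin.sub_def]
  simp only
  split_ifs with h
  · have e : m - u.val + w.val = m + (w.val - u.val) := by omega
    rw [e, Nat.add_mod_left, Nat.mod_eq_of_lt (by omega)]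
  · rw [Nat.mod_eq_of_lt (by omega)]
    omega

/-- Cyclic interval membership, `w ∈ [u, v)`. -/
abbrev cyc (u v w : Fin m) : Prop := (w - u).val < (v - u).val

lemma mem_rectCells (i j a b : Fin m) (c d : Fin m) :
    ((c, d) ∈ rectCells i j a b) ↔ (cyc i j c ∧ cyc a b d) := by
  simp [rectCells, cycInt, Finset.mem_product, Finset.mem_filter, cyc]

lemma cyc_left {i j : Fin m} (h : i ≠ j) : cyc i j i := by
  have hi := i.isLt
  have hj := j.isLt
  have h' : i.val ≠ j.val := fun hh => h (Fin.ext hh)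
  simp only [cyc, sub_val]
  split_ifs <;> omega

lemma not_cyc_right (i j : Fin m) : ¬ cyc i j j := lt_irrefl _

lemma cyc_pred {n : ℕ} (hn : 1 ≤ n) (u v w : Fin (n + 1)) :
    (cyc u v w ∧ cyc u v (w - 1)) ↔ (cyc u v w ∧ w ≠ u) := by
  have hu := u.isLt
  have hv := v.isLt
  have hw := w.isLt
  have hone : (1 : Fin (n + 1)).val = 1 := by
    rw [Fin.val_one']
    exact Nat.mod_eq_of_lt (by omega)
  have hne : (w ≠ u) ↔ ¬ (w.val = u.val) := by simp [Fin.ext_iff]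
  simp only [cyc, sub_val, hone, hne]
  split_ifs <;> omega

lemma sum_split (i j : Fin m) (hij : i ≠ j) (f : Fin m → ℚ) :
    ∑ k, f k = f i + f j + ∑ k ∈ univ \ {i, j}, f k := by
  rw [← Finset.sum_sdiff (Finset.subset_univ ({i, j} : Finset (Fin m))),
    Finset.sum_pair hij]
  ring

/-- Marker set of a permutation. -/
def Omk (σ : Equiv.Perm (Fin m)) : Finset (ℚ × ℚ) :=
  Finset.univ.image fun i => ((i.val : ℚ) + 1/2, ((σ i).val : ℚ) + 1/2)

lemma Omark_eq (G : GridDiagram m) : Omark G = Omk G.σO := rfl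

lemma Xmark_eq (G : GridDiagram m) : Xmark G = Omk G.σX := rfl

lemma Icount_eq (f g : Fin m → ℚ × ℚ) (hf : Function.Injective f) (hg : Function.Injective g) :
    (Icount (univ.image f) (univ.image g) : ℚ)
      = ∑ k : Fin m, ∑ l : Fin m, ind ((f k).1 < (g l).1 ∧ (f k).2 < (g l).2) := by
  have hinj : Function.Injective (fun p : Fin m × Fin m => (f p.1, g p.2)) := by
    rintro ⟨k, l⟩ ⟨k', l'⟩ h
    have h1 : f k = f k' := congrArg Prod.fst h
    have h2 : g l = g l' := congrArg Prod.snd h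
    exact Prod.ext (hf h1) (hg h2)
  have hprod : (univ.image f) ×ˢ (univ.image g)
      = ((univ ×ˢ univ : Finset (Fin m × Fin m)).image fun p => (f p.1, g p.2)) := by
    ext p
    simp only [Finset.mem_product, Finset.mem_image, Finset.mem_univ, true_and]
    constructor
    · rintro ⟨⟨k, hk⟩, l, hl⟩
      exact ⟨(k, l), Prod.ext hk hl⟩
    · rintro ⟨⟨k, l⟩, h⟩
      exact ⟨⟨k, congrArg Prod.fst h⟩, ⟨l, congrArg Prod.snd h⟩⟩
  simp only [Icount]
  rw [hprod, Finset.filter_image, Finset.card_image_of_injective _ hinj,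
    Finset.natCast_card_filter, Finset.sum_product]
  rfl

lemma Ipt_pt (u v : Equiv.Perm (Fin m)) :
    (Icount (ptSet u) (ptSet v) : ℚ) = ∑ k, ∑ l, ind (k < l ∧ u k < v l) := by
  have hinj : ∀ w : Equiv.Perm (Fin m),
      Function.Injective (fun i : Fin m => ((i.val : ℚ), ((w i).val : ℚ))) := by
    intro w p q h
    exact Fin.ext (Nat.cast_injective (congrArg Prod.fst h))
  rw [ptSet, ptSet, Icount_eq _ _ (hinj u) (hinj v)]
  refine Finset.sum_congr rfl fun k _ => Finset.sum_congr rfl fun l _ => ind_congr ?_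
  exact and_congr (Nat.cast_lt.trans Fin.lt_def.symm) (Nat.cast_lt.trans Fin.lt_def.symm)

lemma Ipt_mk (u σ : Equiv.Perm (Fin m)) :
    (Icount (ptSet u) (Omk σ) : ℚ) = ∑ k, ∑ c, ind (k ≤ c ∧ u k ≤ σ c) := by
  have hinj1 : Function.Injective (fun i : Fin m => ((i.val : ℚ), ((u i).val : ℚ))) := by
    intro p q h
    exact Fin.ext (Nat.cast_injective (congrArg Prod.fst h))
  have hinj2 : Function.Injective
      (fun i : Fin m => ((i.val : ℚ) + 1/2, ((σ i).val : ℚ) + 1/2)) := by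
    intro p q h
    have h1 : (p.val : ℚ) + 1/2 = (q.val : ℚ) + 1/2 := congrArg Prod.fst h
    have h2 : (p.val : ℚ) = (q.val : ℚ) := by linarith
    exact Fin.ext (Nat.cast_injective h2)
  rw [ptSet, Omk, Icount_eq _ _ hinj1 hinj2]
  refine Finset.sum_congr rfl fun k _ => Finset.sum_congr rfl fun c _ => ind_congr ?_
  exact and_congr (lt_half.trans Fin.le_def.symm) (lt_half.trans Fin.le_def.symm)

lemma Imk_pt (σ u : Equiv.Perm (Fin m)) :
    (Icount (Omk σ) (ptSet u) : ℚ) = ∑ c, ∑ k, ind (c < k ∧ σ c < u k) := by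
  have hinj1 : Function.Injective (fun i : Fin m => ((i.val : ℚ), ((u i).val : ℚ))) := by
    intro p q h
    exact Fin.ext (Nat.cast_injective (congrArg Prod.fst h))
  have hinj2 : Function.Injective
      (fun i : Fin m => ((i.val : ℚ) + 1/2, ((σ i).val : ℚ) + 1/2)) := by
    intro p q h
    have h1 : (p.val : ℚ) + 1/2 = (q.val : ℚ) + 1/2 := congrArg Prod.fst h
    have h2 : (p.val : ℚ) = (q.val : ℚ) := by linarith
    exact Fin.ext (Nat.cast_injective h2)
  rw [ptSet, Omk, Icount_eq _ _ hinj2 hinj1]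
  refine Finset.sum_congr rfl fun c _ => Finset.sum_congr rfl fun k _ => ind_congr ?_
  exact and_congr (half_lt.trans Fin.lt_def.symm) (half_lt.trans Fin.lt_def.symm)

lemma ind_cyc {u v : Fin m} (h : u ≠ v) (w : Fin m) :
    ind (u ≤ w) - ind (v ≤ w) = ind (cyc u v w) - ind (v < u) := by
  have hu := u.isLt
  have hv := v.isLt
  have hw := w.isLt
  have h' : u.val ≠ v.val := fun hh => h (Fin.ext hh)
  simp only [ind, cyc, sub_val, Fin.lt_def, Fin.le_def]
  split_ifs <;> first | (exfalso; omega) | norm_num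

lemma prev_eq {n : ℕ} (k : Fin (n + 1)) : prev k = k - 1 := by
  have h : finRotate (n + 1) (k - 1) = k := by
    rw [finRotate_succ_apply, sub_add_cancel]
  show (finRotate (n + 1))⁻¹ k = k - 1
  exact Equiv.Perm.inv_eq_iff_eq.mpr h.symm

set_option maxHeartbeats 1600000 in
lemma main {m : ℕ} (x σ : Equiv.Perm (Fin m)) (i j : Fin m) (hij : i ≠ j) :
    ((Icount (ptSet x) (ptSet x) : ℚ)
        - Icount (ptSet (x * Equiv.swap i j)) (ptSet (x * Equiv.swap i j)))
      - ((Icount (ptSet x) (Omk σ) : ℚ)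
        - Icount (ptSet (x * Equiv.swap i j)) (Omk σ))
      - ((Icount (Omk σ) (ptSet x) : ℚ)
        - Icount (Omk σ) (ptSet (x * Equiv.swap i j)))
    = 1 - 2 * ∑ c, ind ((c, σ c) ∈ rectCells i j (x i) (x j))
        + 2 * ((intPts x (rectCells i j (x i) (x j))).card : ℚ) := by
  obtain ⟨n, rfl⟩ : ∃ n, m = n + 1 := ⟨m - 1, by have := i.isLt; omega⟩
  have hn : 1 ≤ n := by
    have hi := i.isLt
    have hj := j.isLt
    have hne : i.val ≠ j.val := fun hh => hij (Fin.ext hh)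
    omega
  set y := x * Equiv.swap i j with hy
  set a := x i with ha
  set b := x j with hb
  have hab : a ≠ b := fun h => hij (x.injective (by rw [← ha, ← hb]; exact h))
  have hyi : y i = b := by
    rw [hy, hb]
    simp [Equiv.Perm.mul_apply]
  have hyj : y j = a := by
    rw [hy, ha]
    simp [Equiv.Perm.mul_apply]
  have hyk : ∀ k, k ≠ i → k ≠ j → y k = x k := by
    intro k h1 h2
    rw [hy]
    simp [Equiv.Perm.mul_apply, Equiv.swap_apply_of_ne_of_ne h1 h2]
  have hE : ∀ k ∈ (univ \ {i, j} : Finset (Fin (n + 1))), k ≠ i ∧ k ≠ j := by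
    intro k hk
    simp only [Finset.mem_sdiff, Finset.mem_insert, Finset.mem_singleton, Finset.mem_univ,
      true_and] at hk
    push_neg at hk
    exact hk
  have hxa : ∀ k, k ≠ i → x k ≠ a := fun k h1 h2 => h1 (x.injective (h2.trans ha))
  have hxb : ∀ k, k ≠ j → x k ≠ b := fun k h1 h2 => h1 (x.injective (h2.trans hb))
  -- difference of the I(x,x) terms
  have hD1 : (∑ k, ∑ l, ind (k < l ∧ x k < x l)) - (∑ k, ∑ l, ind (k < l ∧ y k < y l))
      = (∑ k ∈ univ \ {i, j},
          (ind (k < i ∧ x k < a) - ind (k < i ∧ x k < b)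
            + ind (k < j ∧ x k < b) - ind (k < j ∧ x k < a)
            + ind (i < k ∧ a < x k) - ind (i < k ∧ b < x k)
            + ind (j < k ∧ b < x k) - ind (j < k ∧ a < x k)))
        + (ind (i < j ∧ a < b) - ind (i < j ∧ b < a)
            + ind (j < i ∧ b < a) - ind (j < i ∧ a < b)) := by
    have inx : ∀ p q : Fin (n + 1), (∑ l, ind (p < l ∧ q < x l))
        = ind (p < i ∧ q < a) + ind (p < j ∧ q < b) + ∑ l ∈ univ \ {i, j}, ind (p < l ∧ q < x l) := by
      intro p q
      rw [sum_split i j hij (fun l => ind (p < l ∧ q < x l))]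
      try beta_reduce
      try rw [← ha, ← hb]
    have iny : ∀ p q : Fin (n + 1), (∑ l, ind (p < l ∧ q < y l))
        = ind (p < i ∧ q < b) + ind (p < j ∧ q < a) + ∑ l ∈ univ \ {i, j}, ind (p < l ∧ q < x l) := by
      intro p q
      rw [sum_split i j hij (fun l => ind (p < l ∧ q < y l))]
      beta_reduce
      have hsc : (∑ l ∈ univ \ {i, j}, ind (p < l ∧ q < y l))
          = ∑ l ∈ univ \ {i, j}, ind (p < l ∧ q < x l) :=
        Finset.sum_congr rfl fun l hl => by rw [hyk l (hE l hl).1 (hE l hl).2]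
      rw [hyi, hyj, hsc]
    rw [sum_split i j hij (fun k => ∑ l, ind (k < l ∧ x k < x l)),
        sum_split i j hij (fun k => ∑ l, ind (k < l ∧ y k < y l))]
    beta_reduce
    rw [← ha, ← hb, hyi, hyj]
    rw [inx i a, inx j b, iny i b, iny j a]
    have hEsum : (∑ k ∈ univ \ {i, j}, ∑ l, ind (k < l ∧ x k < x l))
        - (∑ k ∈ univ \ {i, j}, ∑ l, ind (k < l ∧ y k < y l))
        = ∑ k ∈ univ \ {i, j},
            (ind (k < i ∧ x k < a) - ind (k < i ∧ x k < b)
              + ind (k < j ∧ x k < b) - ind (k < j ∧ x k < a)) := by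
      rw [← Finset.sum_sub_distrib]
      refine Finset.sum_congr rfl fun k hk => ?_
      obtain ⟨hki, hkj⟩ := hE k hk
      rw [inx k (x k)]
      have : (∑ l, ind (k < l ∧ y k < y l))
          = ind (k < i ∧ x k < b) + ind (k < j ∧ x k < a)
            + ∑ l ∈ univ \ {i, j}, ind (k < l ∧ x k < x l) := by
        rw [hyk k hki hkj] at *
        rw [iny k (x k)]
      rw [this]
      ring
    have hz1 : ind (i < i ∧ (a : Fin (n + 1)) < a) = 0 := ind_eq_zero (by simp)
    have hz2 : ind (j < j ∧ (b : Fin (n + 1)) < b) = 0 := ind_eq_zero (by simp)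
    have hz3 : ind (j < j ∧ (a : Fin (n + 1)) < a) = 0 := ind_eq_zero (by simp)
    have hz4 : ind (i < i ∧ (b : Fin (n + 1)) < b) = 0 := ind_eq_zero (by simp)
    simp only [Finset.sum_add_distrib, Finset.sum_sub_distrib] at hEsum ⊢
    rw [hz1, hz2, hz3, hz4]
    linarith [hEsum]
  -- difference of the I(x,O) terms
  have hD2 : (∑ k, ∑ c, ind (k ≤ c ∧ x k ≤ σ c)) - (∑ k, ∑ c, ind (k ≤ c ∧ y k ≤ σ c))
      = ∑ c, (ind (i ≤ c ∧ a ≤ σ c) + ind (j ≤ c ∧ b ≤ σ c)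
          - ind (i ≤ c ∧ b ≤ σ c) - ind (j ≤ c ∧ a ≤ σ c)) := by
    rw [sum_split i j hij (fun k => ∑ c, ind (k ≤ c ∧ x k ≤ σ c)),
        sum_split i j hij (fun k => ∑ c, ind (k ≤ c ∧ y k ≤ σ c))]
    beta_reduce
    have hEeq : ∑ k ∈ univ \ {i, j}, ∑ c, ind (k ≤ c ∧ y k ≤ σ c)
        = ∑ k ∈ univ \ {i, j}, ∑ c, ind (k ≤ c ∧ x k ≤ σ c) :=
      Finset.sum_congr rfl fun k hk => by rw [hyk k (hE k hk).1 (hE k hk).2]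
    rw [hEeq, hyi, hyj, ← ha, ← hb]
    simp only [Finset.sum_add_distrib, Finset.sum_sub_distrib]
    ring
  -- difference of the I(O,x) terms
  have hD3 : (∑ c, ∑ k, ind (c < k ∧ σ c < x k)) - (∑ c, ∑ k, ind (c < k ∧ σ c < y k))
      = ∑ c, (ind (c < i ∧ σ c < a) + ind (c < j ∧ σ c < b)
          - ind (c < i ∧ σ c < b) - ind (c < j ∧ σ c < a)) := by
    rw [← Finset.sum_sub_distrib]
    refine Finset.sum_congr rfl fun c _ => ?_
    rw [sum_split i j hij (fun k => ind (c < k ∧ σ c < x k)),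
        sum_split i j hij (fun k => ind (c < k ∧ σ c < y k))]
    beta_reduce
    rw [hyi, hyj, ← ha, ← hb]
    have hEeq : ∑ k ∈ univ \ {i, j}, ind (c < k ∧ σ c < y k)
        = ∑ k ∈ univ \ {i, j}, ind (c < k ∧ σ c < x k) :=
      Finset.sum_congr rfl fun k hk => by rw [hyk k (hE k hk).1 (hE k hk).2]
    rw [hEeq]
    ring
  -- pointwise identities
  have hT : ∀ k ∈ (univ \ {i, j} : Finset (Fin (n + 1))),
      (ind (k < i ∧ x k < a) - ind (k < i ∧ x k < b)
        + ind (k < j ∧ x k < b) - ind (k < j ∧ x k < a)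
        + ind (i < k ∧ a < x k) - ind (i < k ∧ b < x k)
        + ind (j < k ∧ b < x k) - ind (j < k ∧ a < x k))
      = 2 * ind (cyc i j k ∧ cyc a b (x k)) - 2 * ind (b < a) * ind (cyc i j k)
        - 2 * ind (j < i) * ind (cyc a b (x k)) + 2 * ind (j < i) * ind (b < a) := by
    intro k hk
    obtain ⟨hki, hkj⟩ := hE k hk
    have h1 := ind_cyc hij k
    have h2 := ind_cyc hab (x k)
    simp only [ind_and]
    rw [ind_lt_le k i, ind_lt_le k j, ind_lt_le (x k) a, ind_lt_le (x k) b,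
      ind_lt_le i k, ind_lt_le j k, ind_lt_le a (x k), ind_lt_le b (x k),
      ind_le_swap hki, ind_le_swap hkj, ind_le_swap (hxa k hki), ind_le_swap (hxb k hkj)]
    linear_combination 2 * (ind (a ≤ x k) - ind (b ≤ x k)) * h1
      + 2 * (ind (cyc i j k) - ind (j < i)) * h2
  have hU : ∀ c : Fin (n + 1),
      (ind (i ≤ c ∧ a ≤ σ c) + ind (j ≤ c ∧ b ≤ σ c)
          - ind (i ≤ c ∧ b ≤ σ c) - ind (j ≤ c ∧ a ≤ σ c))
        + (ind (c < i ∧ σ c < a) + ind (c < j ∧ σ c < b)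
          - ind (c < i ∧ σ c < b) - ind (c < j ∧ σ c < a))
      = 2 * ind (cyc i j c ∧ cyc a b (σ c)) - 2 * ind (b < a) * ind (cyc i j c)
        - 2 * ind (j < i) * ind (cyc a b (σ c)) + 2 * ind (j < i) * ind (b < a) := by
    intro c
    have h1 := ind_cyc hij c
    have h2 := ind_cyc hab (σ c)
    simp only [ind_and]
    rw [ind_lt_le c i, ind_lt_le c j, ind_lt_le (σ c) a, ind_lt_le (σ c) b]
    linear_combination 2 * (ind (a ≤ σ c) - ind (b ≤ σ c)) * h1
      + 2 * (ind (cyc i j c) - ind (j < i)) * h2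
  have hEps : ind (i < j ∧ a < b) - ind (i < j ∧ b < a)
        + ind (j < i ∧ b < a) - ind (j < i ∧ a < b)
      = 1 - 2 * ind (b < a) - 2 * ind (j < i) + 4 * ind (j < i) * ind (b < a) := by
    simp only [ind_and]
    rw [ind_lt_lt hij, ind_lt_lt hab]
    ring
  -- cardinality of E
  have hcardE : (((univ \ {i, j} : Finset (Fin (n + 1))).card : ℚ)) = (n : ℚ) - 1 := by
    rw [Finset.card_sdiff_of_subset (Finset.subset_univ _), Finset.card_univ, Fintype.card_fin,
      Finset.card_pair hij]
    have h2 : n + 1 - 2 = n - 1 := by omega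
    rw [h2, Nat.cast_sub hn]
    norm_num
  -- summed identities
  have hTs : (∑ k ∈ univ \ {i, j},
        (ind (k < i ∧ x k < a) - ind (k < i ∧ x k < b)
          + ind (k < j ∧ x k < b) - ind (k < j ∧ x k < a)
          + ind (i < k ∧ a < x k) - ind (i < k ∧ b < x k)
          + ind (j < k ∧ b < x k) - ind (j < k ∧ a < x k)))
      = 2 * (∑ k ∈ univ \ {i, j}, ind (cyc i j k ∧ cyc a b (x k)))
        - 2 * ind (b < a) * (∑ k ∈ univ \ {i, j}, ind (cyc i j k))
        - 2 * ind (j < i) * (∑ k ∈ univ \ {i, j}, ind (cyc a b (x k)))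
        + ((n : ℚ) - 1) * (2 * ind (j < i) * ind (b < a)) := by
    rw [Finset.sum_congr rfl hT]
    simp only [Finset.sum_add_distrib, Finset.sum_sub_distrib, ← Finset.mul_sum,
      Finset.sum_const, nsmul_eq_mul]
    rw [hcardE]
    ring
  have hUs : (∑ c, (ind (i ≤ c ∧ a ≤ σ c) + ind (j ≤ c ∧ b ≤ σ c)
          - ind (i ≤ c ∧ b ≤ σ c) - ind (j ≤ c ∧ a ≤ σ c)))
        + (∑ c, (ind (c < i ∧ σ c < a) + ind (c < j ∧ σ c < b)
          - ind (c < i ∧ σ c < b) - ind (c < j ∧ σ c < a)))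
      = 2 * (∑ c, ind (cyc i j c ∧ cyc a b (σ c)))
        - 2 * ind (b < a) * (∑ c, ind (cyc i j c))
        - 2 * ind (j < i) * (∑ c, ind (cyc a b (σ c)))
        + ((n : ℚ) + 1) * (2 * ind (j < i) * ind (b < a)) := by
    rw [← Finset.sum_add_distrib, Finset.sum_congr rfl (fun c _ => hU c)]
    simp only [Finset.sum_add_distrib, Finset.sum_sub_distrib, ← Finset.mul_sum,
      Finset.sum_const, Finset.card_univ, Fintype.card_fin, nsmul_eq_mul]
    push_cast
    ring
  have hColSum : (∑ c, ind (cyc i j c)) = 1 + ∑ c ∈ univ \ {i, j}, ind (cyc i j c) := by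
    rw [sum_split i j hij (fun c => ind (cyc i j c))]
    try beta_reduce
    rw [ind_eq_one (cyc_left hij), ind_eq_zero (not_cyc_right i j)]
    ring
  have hRowRel : (∑ c, ind (cyc a b (σ c))) = 1 + ∑ k ∈ univ \ {i, j}, ind (cyc a b (x k)) := by
    have e1 : (∑ c, ind (cyc a b (σ c))) = ∑ d, ind (cyc a b d) :=
      Equiv.sum_comp σ (fun d => ind (cyc a b d))
    have e2 : (∑ k, ind (cyc a b (x k))) = ∑ d, ind (cyc a b d) :=
      Equiv.sum_comp x (fun d => ind (cyc a b d))
    have e3 : (∑ k, ind (cyc a b (x k)))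
        = 1 + ∑ k ∈ univ \ {i, j}, ind (cyc a b (x k)) := by
      rw [sum_split i j hij (fun k => ind (cyc a b (x k)))]
      try beta_reduce
      rw [← ha, ← hb, ind_eq_one (cyc_left hab), ind_eq_zero (not_cyc_right a b)]
      ring
    rw [e1, ← e2, e3]
  -- interior points count
  have h0 : ((intPts x (rectCells i j a b)).card : ℚ)
      = ∑ k, ind ((cyc i j k ∧ k ≠ i) ∧ (cyc a b (x k) ∧ x k ≠ a)) := by
    simp only [intPts, Finset.natCast_card_filter]
    refine Finset.sum_congr rfl fun k _ => ?_
    have hiff : ((k, x k) ∈ rectCells i j a b ∧ (prev k, x k) ∈ rectCells i j a b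
        ∧ (k, prev (x k)) ∈ rectCells i j a b ∧ (prev k, prev (x k)) ∈ rectCells i j a b)
        ↔ ((cyc i j k ∧ k ≠ i) ∧ (cyc a b (x k) ∧ x k ≠ a)) := by
      simp only [prev_eq, mem_rectCells]
      have c1 := cyc_pred hn i j k
      have c2 := cyc_pred hn a b (x k)
      constructor
      · rintro ⟨⟨A, B⟩, ⟨A', -⟩, ⟨-, B'⟩, -⟩
        exact ⟨c1.mp ⟨A, A'⟩, c2.mp ⟨B, B'⟩⟩
      · rintro ⟨hA, hB⟩
        obtain ⟨A, A'⟩ := c1.mpr hA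
        obtain ⟨B, B'⟩ := c2.mpr hB
        exact ⟨⟨A, B⟩, ⟨A', B⟩, ⟨A, B'⟩, A', B'⟩
    exact ind_congr hiff
  have hInt : ((intPts x (rectCells i j a b)).card : ℚ)
      = ∑ k ∈ univ \ {i, j}, ind (cyc i j k ∧ cyc a b (x k)) := by
    rw [h0, sum_split i j hij
      (fun k => ind ((cyc i j k ∧ k ≠ i) ∧ (cyc a b (x k) ∧ x k ≠ a)))]
    try beta_reduce
    have hz1 : ind ((cyc i j i ∧ i ≠ i) ∧ (cyc a b (x i) ∧ x i ≠ a)) = 0 :=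
      ind_eq_zero (fun h => h.1.2 rfl)
    have hz2 : ind ((cyc i j j ∧ j ≠ i) ∧ (cyc a b (x j) ∧ x j ≠ a)) = 0 :=
      ind_eq_zero (fun h => by
        have := h.2.1
        rw [← hb] at this
        exact not_cyc_right a b this)
    rw [hz1, hz2]
    have hsc : (∑ k ∈ univ \ {i, j}, ind ((cyc i j k ∧ k ≠ i) ∧ (cyc a b (x k) ∧ x k ≠ a)))
        = ∑ k ∈ univ \ {i, j}, ind (cyc i j k ∧ cyc a b (x k)) := by
      refine Finset.sum_congr rfl fun k hk => ind_congr ?_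
      obtain ⟨hki, hkj⟩ := hE k hk
      constructor
      · rintro ⟨⟨h1, -⟩, h2, -⟩
        exact ⟨h1, h2⟩
      · rintro ⟨h1, h2⟩
        exact ⟨⟨h1, hki⟩, h2, hxa k hki⟩
    rw [hsc]
    ring
  have hCellσ : (∑ c, ind ((c, σ c) ∈ rectCells i j a b))
      = ∑ c, ind (cyc i j c ∧ cyc a b (σ c)) :=
    Finset.sum_congr rfl fun c _ => ind_congr (mem_rectCells i j a b c (σ c))
  -- assemble
  rw [Ipt_pt x x, Ipt_pt y y, Ipt_mk x σ, Ipt_mk y σ, Imk_pt σ x, Imk_pt σ y, hCellσ, hInt]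
  linear_combination hD1 - hD2 - hD3 + hTs - hUs
    + 2 * ind (b < a) * hColSum + 2 * ind (j < i) * hRowRel + hEps

lemma maslov_diff {m : ℕ} (x σ : Equiv.Perm (Fin m)) (i j : Fin m) (hij : i ≠ j) :
    (Jcount (ptSet x) (ptSet x) - 2 * Jcount (ptSet x) (Omk σ))
      - (Jcount (ptSet (x * Equiv.swap i j)) (ptSet (x * Equiv.swap i j))
        - 2 * Jcount (ptSet (x * Equiv.swap i j)) (Omk σ))
    = 1 - 2 * ((Finset.univ.filter
          fun c : Fin m => (c, σ c) ∈ rectCells i j (x i) (x j)).card : ℚ)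
      + 2 * ((intPts x (rectCells i j (x i) (x j))).card : ℚ) := by
  have hm := main x σ i j hij
  have hc : ((Finset.univ.filter
        fun c : Fin m => (c, σ c) ∈ rectCells i j (x i) (x j)).card : ℚ)
      = ∑ c, ind ((c, σ c) ∈ rectCells i j (x i) (x j)) := by
    rw [Finset.natCast_card_filter]
    rfl
  simp only [Jcount]
  rw [hc]
  linear_combination hm

end Stmt9

/-- For grid states `x`, `y` of a grid diagram `𝔾` and a
rectangle `r ∈ Rect(x,y)`:
`M(x) − M(y) = 1 − 2·#(r ∩ 𝕆) + 2·#(Int(r) ∩ x)` and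
`A(x) − A(y) = #(r ∩ 𝕏) − #(r ∩ 𝕆)`. -/
theorem statement9 {m : ℕ} (G : GridDiagram m) (x y : Equiv.Perm (Fin m))
    (r : Finset (Fin m × Fin m)) (hr : r ∈ Grid.Rect x y) :
    Grid.MaslovO G x - Grid.MaslovO G y =
      1 - 2 * (Grid.countO G r : ℚ) + 2 * ((Grid.intPts x r).card : ℚ) ∧
    Grid.Alex G x - Grid.Alex G y =
      (Grid.countX G r : ℚ) - (Grid.countO G r : ℚ) := by
  obtain ⟨i, j, hij, hyeq, hcase⟩ := hr
  subst hyeq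
  rcases hcase with hr1 | hr1 <;> subst hr1
  · have hO := Stmt9.maslov_diff x G.σO i j hij
    have hX := Stmt9.maslov_diff x G.σX i j hij
    constructor
    · simp only [Grid.MaslovO, Grid.countO, Stmt9.Omark_eq]
      linear_combination hO
    · simp only [Grid.Alex, Grid.MaslovO, Grid.MaslovX, Grid.countO, Grid.countX,
        Stmt9.Omark_eq, Stmt9.Xmark_eq]
      linear_combination (1/2 : ℚ) * hO - (1/2 : ℚ) * hX
  · have hO := Stmt9.maslov_diff x G.σO j i hij.symm
    have hX := Stmt9.maslov_diff x G.σX j i hij.symm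
    rw [Equiv.swap_comm i j]
    constructor
    · simp only [Grid.MaslovO, Grid.countO, Stmt9.Omark_eq]
      linear_combination hO
    · simp only [Grid.Alex, Grid.MaslovO, Grid.MaslovX, Grid.countO, Grid.countX,
        Stmt9.Omark_eq, Stmt9.Xmark_eq]
      linear_combination (1/2 : ℚ) * hO - (1/2 : ℚ) * hX
end
end

section
/- Suppose the grid diagram 𝔾₊ is obtained from the grid diagram 𝔾₋ (of the same size) by an O swap. Then there exists an F₂-linear map 𝒫_O : 𝒢̃C(𝔾₊) → 𝒢̃C(𝔾₋) such that 𝒫_O ∘ ∂̃₊ = ∂̃₋ ∘ 𝒫_O, 𝒫_O is homogeneous of Maslov degree −1 (it sends Maslov grading d to Maslov grading d−1), 𝒫_O(F_j 𝒢̃C(𝔾₊)) ⊆ F_{j−s} 𝒢̃C(𝔾₋) for all j, where s = (ℓ(𝔾₊) − ℓ(𝔾₋) + 1)/2 ∈ {0, 1}, and 𝒫_O(x^±(𝔾₊)) = x^±(𝔾₋) for both signs. -/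
/-!
Grid diagrams, the filtered grid complex over `F₂ = ZMod 2`, its Alexander
filtration, Maslov grading, canonical (Legendrian) grid states, the associated
spectral sequence, and the grid moves (commutation, X:SE/X:NW (de)stabilization,
X swap, O swap, birth).
-/

noncomputable section

open Finset

namespace Grid

variable {m m' : ℕ}

/-! ### Auxiliary lemmas for statement 15 -/

theorem _root_.Equiv.Perm.inv_apply_self {α : Type*} (f : Equiv.Perm α) (x : α) :
    f⁻¹ (f x) = x := f.symm_apply_apply x

theorem _root_.Equiv.Perm.apply_inv_self {α : Type*} (f : Equiv.Perm α) (x : α) :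
    f (f⁻¹ x) = x := f.apply_symm_apply x

section Aux15

variable {m : ℕ}

lemma fin_sub_val' (a b : Fin m) :
    (a - b).val = if b.val ≤ a.val then a.val - b.val else a.val + m - b.val := by
  have ha := a.isLt
  have hb := b.isLt
  have : (a - b).val = (m - b.val + a.val) % m := by rw [Fin.sub_def]
  rw [this]
  rcases le_or_gt b.val a.val with h | h
  · rw [if_pos h]
    have h2 : m - b.val + a.val = a.val - b.val + m := by omega
    rw [h2, Nat.add_mod_right, Nat.mod_eq_of_lt (by omega)]
  · rw [if_neg (by omega), Nat.mod_eq_of_lt (by omega)]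
    omega

lemma mem_cycInt {u v w : Fin m} : w ∈ cycInt u v ↔ (w - u).val < (v - u).val := by
  simp [cycInt]

lemma mem_cycInt' {u v w : Fin m} :
    w ∈ cycInt u v ↔
      (if u.val ≤ w.val then w.val - u.val else w.val + m - u.val) <
        (if u.val ≤ v.val then v.val - u.val else v.val + m - u.val) := by
  rw [mem_cycInt, fin_sub_val', fin_sub_val']

/-- Walking lemma W1. -/
lemma cycInt_c2_iff_c3 {c₂ c₃ i j : Fin m} (h23 : c₂.val < c₃.val)
    (hi : i.val ≤ c₂.val ∨ c₃.val < i.val) (hj : j.val ≤ c₂.val ∨ c₃.val < j.val) :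
    (c₂ ∈ cycInt i j ↔ c₃ ∈ cycInt i j) := by
  have := i.isLt; have := j.isLt; have := c₂.isLt; have := c₃.isLt
  simp only [mem_cycInt']
  split_ifs <;> omega

/-- Walking lemma W2a. -/
lemma cycInt_c3_mem {c₂ c₃ i j : Fin m} (h23 : c₂.val < c₃.val)
    (hi : c₂.val < i.val ∧ i.val ≤ c₃.val) (hj : j.val ≤ c₂.val ∨ c₃.val < j.val) :
    c₃ ∈ cycInt i j := by
  have := i.isLt; have := j.isLt; have := c₂.isLt; have := c₃.isLt
  simp only [mem_cycInt']
  split_ifs <;> omega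

/-- Walking lemma W2b. -/
lemma cycInt_c2_mem {c₂ c₃ i j : Fin m} (h23 : c₂.val < c₃.val)
    (hi : i.val ≤ c₂.val ∨ c₃.val < i.val) (hj : c₂.val < j.val ∧ j.val ≤ c₃.val) :
    c₂ ∈ cycInt i j := by
  have := i.isLt; have := j.isLt; have := c₂.isLt; have := c₃.isLt
  simp only [mem_cycInt']
  split_ifs <;> omega

/-- Row lemma R1: if neither endpoint is `h'`, then `h ∈ [a,b) ↔ h' ∈ [a,b)`. -/
lemma row_both_or_neither {h h' a b : Fin m} (hrow : h'.val = h.val + 1)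
    (ha : a.val ≠ h'.val) (hb : b.val ≠ h'.val) :
    (h ∈ cycInt a b ↔ h' ∈ cycInt a b) := by
  have := a.isLt; have := b.isLt; have := h.isLt; have := h'.isLt
  simp only [mem_cycInt']
  split_ifs <;> omega

/-- Row lemma R2: `h ∈ [a, h')` when `a ≠ h'`. -/
lemma row_h_mem {h h' a : Fin m} (hrow : h'.val = h.val + 1) (ha : a.val ≠ h'.val) :
    h ∈ cycInt a h' := by
  have := a.isLt; have := h.isLt; have := h'.isLt
  simp only [mem_cycInt']
  split_ifs <;> omega

lemma not_mem_cycInt_self_right {u v : Fin m} : v ∉ cycInt u v := by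
  simp [mem_cycInt]

/-- Row lemma R4: `h' ∈ [h', b)` when `b ≠ h'`. -/
lemma row_h'_mem {h' b : Fin m} (hb : b.val ≠ h'.val) : h' ∈ cycInt h' b := by
  have := b.isLt; have := h'.isLt
  simp only [mem_cycInt']
  split_ifs <;> omega

/-- Row lemma R5: `h ∉ [h', b)`. -/
lemma row_h_not_mem {h h' b : Fin m} (hrow : h'.val = h.val + 1) :
    h ∉ cycInt h' b := by
  have := b.isLt; have := h.isLt; have := h'.isLt
  simp only [mem_cycInt']
  split_ifs <;> omega

lemma mem_rectCells' {i j a b : Fin m} {p : Fin m × Fin m} :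
    p ∈ rectCells i j a b ↔ p.1 ∈ cycInt i j ∧ p.2 ∈ cycInt a b := by
  simp [rectCells, Finset.mem_product]

lemma rect_norm {x y : Equiv.Perm (Fin m)} {r : Finset (Fin m × Fin m)} (hr : r ∈ Rect x y) :
    ∃ i j : Fin m, i ≠ j ∧ y = x * Equiv.swap i j ∧ r = rectCells i j (x i) (x j) := by
  obtain ⟨i, j, hij, hy, hor | hor⟩ := hr
  · exact ⟨i, j, hij, hy, hor⟩
  · exact ⟨j, i, hij.symm, by rwa [Equiv.swap_comm], hor⟩

lemma countO_eq_zero_iff {G : GridDiagram m} {r : Finset (Fin m × Fin m)} :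
    countO G r = 0 ↔ ∀ c, (c, G.σO c) ∉ r := by
  simp [countO, Finset.card_eq_zero, Finset.filter_eq_empty_iff]

lemma countO_ne_zero {G : GridDiagram m} {r : Finset (Fin m × Fin m)} {c : Fin m}
    (hc : (c, G.σO c) ∈ r) : countO G r ≠ 0 := by
  rw [Ne, countO_eq_zero_iff]
  exact fun H => H c hc

end Aux15

section Aux15CM

variable {m : ℕ}

private lemma inv_eq_of_val {x : Equiv.Perm (Fin m)} {u v : Fin m}
    (h : (x u).val = v.val) : x⁻¹ v = u := by
  have h2 : x u = v := Fin.ext h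
  rw [← h2, Equiv.Perm.inv_apply_self]

/-- Case 1: both states good — the `O`-free conditions agree. -/
lemma rect_countO_congr {Gp Gm : GridDiagram m} {hr hr' c₂ c₃ : Fin m}
    (hrow : hr'.val = hr.val + 1) (h23 : c₂.val < c₃.val)
    (hO2 : Gm.σO c₂ = hr') (hO3 : Gm.σO c₃ = hr)
    (hOs : Gp.σO = Gm.σO * Equiv.swap c₂ c₃)
    {x y : Equiv.Perm (Fin m)} {r : Finset (Fin m × Fin m)}
    (hgx : ¬(c₂.val < (x⁻¹ hr').val ∧ (x⁻¹ hr').val ≤ c₃.val))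
    (hgy : ¬(c₂.val < (y⁻¹ hr').val ∧ (y⁻¹ hr').val ≤ c₃.val))
    (hrRect : r ∈ Rect x y) :
    (countO Gp r = 0 ↔ countO Gm r = 0) := by
  have hp2 : Gp.σO c₂ = hr := by
    rw [hOs, Equiv.Perm.mul_apply, Equiv.swap_apply_left, hO3]
  have hp3 : Gp.σO c₃ = hr' := by
    rw [hOs, Equiv.Perm.mul_apply, Equiv.swap_apply_right, hO2]
  have hpc : ∀ c, c ≠ c₂ → c ≠ c₃ → Gp.σO c = Gm.σO c := fun c hc2 hc3 => by
    rw [hOs, Equiv.Perm.mul_apply, Equiv.swap_apply_of_ne_of_ne hc2 hc3]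
  obtain ⟨i, j, hij, hy, rfl⟩ := rect_norm hrRect
  have hty : y⁻¹ hr' = Equiv.swap i j (x⁻¹ hr') := by
    rw [hy, mul_inv_rev, Equiv.Perm.mul_apply, Equiv.swap_inv]
  by_cases hti : x⁻¹ hr' = i
  · -- special: x i = h'
    have hxi : x i = hr' := by rw [← hti, Equiv.Perm.apply_inv_self]
    have hxj : (x j).val ≠ hr'.val := by
      intro hv
      exact hij (by rw [← hti, inv_eq_of_val hv])
    rw [hti, Equiv.swap_apply_left] at hty
    rw [hty] at hgy
    rw [hti] at hgx
    have hi' : i.val ≤ c₂.val ∨ c₃.val < i.val := by omega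
    have hj' : j.val ≤ c₂.val ∨ c₃.val < j.val := by omega
    have hW := cycInt_c2_iff_c3 (m := m) h23 hi' hj'
    have hrin : hr' ∈ cycInt (x i) (x j) := by rw [hxi]; exact row_h'_mem hxj
    have hrout : hr ∉ cycInt (x i) (x j) := by rw [hxi]; exact row_h_not_mem hrow
    rw [countO_eq_zero_iff, countO_eq_zero_iff]
    constructor
    · intro H c
      by_cases hc2 : c = c₂
      · subst hc2; rw [hO2, mem_rectCells']
        rintro ⟨hcol, hrw⟩
        exact H c₃ (mem_rectCells'.2 ⟨hW.1 hcol, by rw [hp3]; exact hrw⟩)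
      · by_cases hc3 : c = c₃
        · subst hc3; rw [hO3, mem_rectCells']
          rintro ⟨_, hrw⟩; exact hrout hrw
        · rw [← hpc c hc2 hc3]; exact H c
    · intro H c
      by_cases hc2 : c = c₂
      · subst hc2; rw [hp2, mem_rectCells']
        rintro ⟨_, hrw⟩; exact hrout hrw
      · by_cases hc3 : c = c₃
        · subst hc3; rw [hp3, mem_rectCells']
          rintro ⟨hcol, hrw⟩
          exact H c₂ (mem_rectCells'.2 ⟨hW.2 hcol, by rw [hO2]; exact hrw⟩)
        · rw [hpc c hc2 hc3]; exact H c
  · by_cases htj : x⁻¹ hr' = j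
    · -- special: x j = h'
      have hxj : x j = hr' := by rw [← htj, Equiv.Perm.apply_inv_self]
      have hxi : (x i).val ≠ hr'.val := by
        intro hv
        exact hti (inv_eq_of_val hv)
      rw [htj, Equiv.swap_apply_right] at hty
      rw [hty] at hgy
      rw [htj] at hgx
      have hi' : i.val ≤ c₂.val ∨ c₃.val < i.val := by omega
      have hj' : j.val ≤ c₂.val ∨ c₃.val < j.val := by omega
      have hW := cycInt_c2_iff_c3 (m := m) h23 hi' hj'
      have hrin : hr ∈ cycInt (x i) (x j) := by rw [hxj]; exact row_h_mem hrow hxi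
      have hrout : hr' ∉ cycInt (x i) (x j) := by rw [hxj]; exact not_mem_cycInt_self_right
      rw [countO_eq_zero_iff, countO_eq_zero_iff]
      constructor
      · intro H c
        by_cases hc2 : c = c₂
        · subst hc2; rw [hO2, mem_rectCells']
          rintro ⟨_, hrw⟩; exact hrout hrw
        · by_cases hc3 : c = c₃
          · subst hc3; rw [hO3, mem_rectCells']
            rintro ⟨hcol, hrw⟩
            exact H c₂ (mem_rectCells'.2 ⟨hW.2 hcol, by rw [hp2]; exact hrw⟩)
          · rw [← hpc c hc2 hc3]; exact H c
      · intro H c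
        by_cases hc2 : c = c₂
        · subst hc2; rw [hp2, mem_rectCells']
          rintro ⟨hcol, hrw⟩
          exact H c₃ (mem_rectCells'.2 ⟨hW.1 hcol, by rw [hO3]; exact hrw⟩)
        · by_cases hc3 : c = c₃
          · subst hc3; rw [hp3, mem_rectCells']
            rintro ⟨_, hrw⟩; exact hrout hrw
          · rw [hpc c hc2 hc3]; exact H c
    · -- generic: t not moved
      have hxi : (x i).val ≠ hr'.val := by
        intro hv
        exact hti (inv_eq_of_val hv)
      have hxj : (x j).val ≠ hr'.val := by
        intro hv
        exact htj (inv_eq_of_val hv)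
      have hR := row_both_or_neither (a := x i) (b := x j) hrow hxi hxj
      rw [countO_eq_zero_iff, countO_eq_zero_iff]
      apply forall_congr'
      intro c
      by_cases hc2 : c = c₂
      · subst hc2
        rw [hp2, hO2, mem_rectCells', mem_rectCells']
        exact not_congr (and_congr_right fun _ => hR)
      · by_cases hc3 : c = c₃
        · subst hc3
          rw [hp3, hO3, mem_rectCells', mem_rectCells']
          exact not_congr (and_congr_right fun _ => hR.symm)
        · rw [hpc c hc2 hc3]

/-- Case 2: `x` good, `y` bad — every rectangle contains a `Gm`-`O`. -/
lemma rect_countOm_ne_zero {Gm : GridDiagram m} {hr hr' c₂ c₃ : Fin m}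
    (hrow : hr'.val = hr.val + 1) (h23 : c₂.val < c₃.val)
    (hO2 : Gm.σO c₂ = hr') (hO3 : Gm.σO c₃ = hr)
    {x y : Equiv.Perm (Fin m)} {r : Finset (Fin m × Fin m)}
    (hgx : ¬(c₂.val < (x⁻¹ hr').val ∧ (x⁻¹ hr').val ≤ c₃.val))
    (hby : c₂.val < (y⁻¹ hr').val ∧ (y⁻¹ hr').val ≤ c₃.val)
    (hrRect : r ∈ Rect x y) :
    countO Gm r ≠ 0 := by
  obtain ⟨i, j, hij, hy, rfl⟩ := rect_norm hrRect
  have hty : y⁻¹ hr' = Equiv.swap i j (x⁻¹ hr') := by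
    rw [hy, mul_inv_rev, Equiv.Perm.mul_apply, Equiv.swap_inv]
  by_cases hti : x⁻¹ hr' = i
  · -- x i = h', rows contain h' only; use O at (c₂, h')
    have hxi : x i = hr' := by rw [← hti, Equiv.Perm.apply_inv_self]
    have hxj : (x j).val ≠ hr'.val := by
      intro hv
      exact hij (by rw [← hti, inv_eq_of_val hv])
    rw [hti, Equiv.swap_apply_left] at hty
    rw [hty] at hby
    rw [hti] at hgx
    have hcol : c₂ ∈ cycInt i j :=
      cycInt_c2_mem h23 (by omega) (by omega)
    have hrw : hr' ∈ cycInt (x i) (x j) := by rw [hxi]; exact row_h'_mem hxj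
    exact countO_ne_zero (c := c₂) (mem_rectCells'.2 ⟨hcol, by rw [hO2]; exact hrw⟩)
  · by_cases htj : x⁻¹ hr' = j
    · -- x j = h', rows contain h only; use O at (c₃, h)
      have hxj : x j = hr' := by rw [← htj, Equiv.Perm.apply_inv_self]
      have hxi : (x i).val ≠ hr'.val := by
        intro hv
        exact hti (inv_eq_of_val hv)
      rw [htj, Equiv.swap_apply_right] at hty
      rw [hty] at hby
      rw [htj] at hgx
      have hcol : c₃ ∈ cycInt i j :=
        cycInt_c3_mem h23 (by omega) (by omega)
      have hrw : hr ∈ cycInt (x i) (x j) := by rw [hxj]; exact row_h_mem hrow hxi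
      exact countO_ne_zero (c := c₃) (mem_rectCells'.2 ⟨hcol, by rw [hO3]; exact hrw⟩)
    · exfalso
      rw [hty, Equiv.swap_apply_of_ne_of_ne hti htj] at hby
      exact hgx hby

/-- Case 3: `x` bad, `y` good — every rectangle contains a `Gp`-`O`. -/
lemma rect_countOp_ne_zero {Gp Gm : GridDiagram m} {hr hr' c₂ c₃ : Fin m}
    (hrow : hr'.val = hr.val + 1) (h23 : c₂.val < c₃.val)
    (hO2 : Gm.σO c₂ = hr') (hO3 : Gm.σO c₃ = hr)
    (hOs : Gp.σO = Gm.σO * Equiv.swap c₂ c₃)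
    {x y : Equiv.Perm (Fin m)} {r : Finset (Fin m × Fin m)}
    (hbx : c₂.val < (x⁻¹ hr').val ∧ (x⁻¹ hr').val ≤ c₃.val)
    (hgy : ¬(c₂.val < (y⁻¹ hr').val ∧ (y⁻¹ hr').val ≤ c₃.val))
    (hrRect : r ∈ Rect x y) :
    countO Gp r ≠ 0 := by
  have hp2 : Gp.σO c₂ = hr := by
    rw [hOs, Equiv.Perm.mul_apply, Equiv.swap_apply_left, hO3]
  have hp3 : Gp.σO c₃ = hr' := by
    rw [hOs, Equiv.Perm.mul_apply, Equiv.swap_apply_right, hO2]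
  obtain ⟨i, j, hij, hy, rfl⟩ := rect_norm hrRect
  have hty : y⁻¹ hr' = Equiv.swap i j (x⁻¹ hr') := by
    rw [hy, mul_inv_rev, Equiv.Perm.mul_apply, Equiv.swap_inv]
  by_cases hti : x⁻¹ hr' = i
  · -- x i = h', rows contain h' only; use Gp-O at (c₃, h')
    have hxi : x i = hr' := by rw [← hti, Equiv.Perm.apply_inv_self]
    have hxj : (x j).val ≠ hr'.val := by
      intro hv
      exact hij (by rw [← hti, inv_eq_of_val hv])
    rw [hti, Equiv.swap_apply_left] at hty
    rw [hty] at hgy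
    rw [hti] at hbx
    have hcol : c₃ ∈ cycInt i j :=
      cycInt_c3_mem h23 (by omega) (by omega)
    have hrw : hr' ∈ cycInt (x i) (x j) := by rw [hxi]; exact row_h'_mem hxj
    exact countO_ne_zero (c := c₃) (mem_rectCells'.2 ⟨hcol, by rw [hp3]; exact hrw⟩)
  · by_cases htj : x⁻¹ hr' = j
    · -- x j = h', rows contain h only; use Gp-O at (c₂, h)
      have hxj : x j = hr' := by rw [← htj, Equiv.Perm.apply_inv_self]
      have hxi : (x i).val ≠ hr'.val := by
        intro hv
        exact hti (inv_eq_of_val hv)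
      rw [htj, Equiv.swap_apply_right] at hty
      rw [hty] at hgy
      rw [htj] at hbx
      have hcol : c₂ ∈ cycInt i j :=
        cycInt_c2_mem h23 (by omega) (by omega)
      have hrw : hr ∈ cycInt (x i) (x j) := by rw [hxj]; exact row_h_mem hrow hxi
      exact countO_ne_zero (c := c₂) (mem_rectCells'.2 ⟨hcol, by rw [hp2]; exact hrw⟩)
    · exfalso
      rw [hty, Equiv.swap_apply_of_ne_of_ne hti htj] at hgy
      exact hgy hbx

end Aux15CM

section Aux15M

variable {m : ℕ}

private lemma mem_ite_singleton {b : Prop} [Decidable b] {p q : Fin m × Fin m} :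
    (p ∈ (if b then ({q} : Finset (Fin m × Fin m)) else ∅)) ↔ (b ∧ p = q) := by
  split_ifs with hb <;> simp [hb]

private lemma xval_bridge (x : Equiv.Perm (Fin m)) (hr' u : Fin m) :
    (x u).val = hr'.val ↔ u.val = (x⁻¹ hr').val := by
  constructor
  · intro hv; rw [← inv_eq_of_val hv]
  · intro hv
    have h2 : u = x⁻¹ hr' := Fin.ext hv
    rw [h2, Equiv.Perm.apply_inv_self]

lemma Icount_image {f g : Fin m → ℚ × ℚ} (hf : Function.Injective f)
    (hg : Function.Injective g) :
    Icount (Finset.univ.image f) (Finset.univ.image g) =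
      ((Finset.univ ×ˢ Finset.univ).filter fun p : Fin m × Fin m =>
        (f p.1).1 < (g p.2).1 ∧ (f p.1).2 < (g p.2).2).card := by
  rw [Icount]
  symm
  apply Finset.card_bij (fun p _ => (f p.1, g p.2))
  · intro p hp
    simp only [Finset.mem_filter, Finset.mem_product] at hp ⊢
    exact ⟨⟨Finset.mem_image_of_mem f (Finset.mem_univ _),
      Finset.mem_image_of_mem g (Finset.mem_univ _)⟩, hp.2⟩
  · intro p hp q hq hpq
    have h1 := congrArg Prod.fst hpq
    have h2 := congrArg Prod.snd hpq
    exact Prod.ext (hf h1) (hg h2)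
  · intro q hq
    simp only [Finset.mem_filter, Finset.mem_product, Finset.mem_image] at hq
    obtain ⟨⟨⟨u, _, hu⟩, ⟨v, _, hv⟩⟩, hpred⟩ := hq
    refine ⟨(u, v), Finset.mem_filter.2 ⟨Finset.mem_product.2
      ⟨Finset.mem_univ _, Finset.mem_univ _⟩, ?_⟩, by rw [hu, hv]⟩
    show (f u).1 < (g v).1 ∧ (f u).2 < (g v).2
    rw [hu, hv]; exact hpred

private lemma q_lt_add_half {a b : ℕ} : (a : ℚ) < (b : ℚ) + 1/2 ↔ a ≤ b := by
  constructor
  · intro hlt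
    by_contra hab
    push_neg at hab
    have h2 : (b : ℚ) + 1 ≤ (a : ℚ) := by exact_mod_cast hab
    linarith
  · intro hle
    have h2 : (a : ℚ) ≤ (b : ℚ) := by exact_mod_cast hle
    linarith

private lemma q_add_half_lt {a b : ℕ} : (a : ℚ) + 1/2 < (b : ℚ) ↔ a < b := by
  constructor
  · intro hlt
    by_contra hab
    push_neg at hab
    have h2 : (b : ℚ) ≤ (a : ℚ) := by exact_mod_cast hab
    linarith
  · intro hle
    have h2 : (a : ℚ) + 1 ≤ (b : ℚ) := by exact_mod_cast hle
    linarith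

private lemma q_add_half_lt_add_half {a b : ℕ} :
    (a : ℚ) + 1/2 < (b : ℚ) + 1/2 ↔ a < b := by
  rw [add_lt_add_iff_right]
  exact Nat.cast_lt

private lemma ptSet_inj (x : Equiv.Perm (Fin m)) :
    Function.Injective fun i : Fin m => ((i.val : ℚ), ((x i).val : ℚ)) := by
  intro u v huv
  have h1 : (u.val : ℚ) = v.val := congrArg Prod.fst huv
  exact Fin.ext (by exact_mod_cast h1)

private lemma mark_inj (σ : Equiv.Perm (Fin m)) :
    Function.Injective fun i : Fin m =>
      ((i.val : ℚ) + 1/2, ((σ i).val : ℚ) + 1/2) := by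
  intro u v huv
  have h1 : (u.val : ℚ) + 1/2 = (v.val : ℚ) + 1/2 := congrArg Prod.fst huv
  have h2 : (u.val : ℚ) = v.val := by linarith
  exact Fin.ext (by exact_mod_cast h2)

lemma IcountXO (G : GridDiagram m) (x : Equiv.Perm (Fin m)) :
    Icount (ptSet x) (Omark G) =
      ((Finset.univ ×ˢ Finset.univ).filter fun p : Fin m × Fin m =>
        p.1.val ≤ p.2.val ∧ (x p.1).val ≤ (G.σO p.2).val).card := by
  rw [ptSet, Omark, Icount_image (ptSet_inj x) (mark_inj G.σO)]
  congr 1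
  apply Finset.filter_congr
  intro p _
  exact and_congr q_lt_add_half q_lt_add_half

lemma IcountOX (G : GridDiagram m) (x : Equiv.Perm (Fin m)) :
    Icount (Omark G) (ptSet x) =
      ((Finset.univ ×ˢ Finset.univ).filter fun p : Fin m × Fin m =>
        p.1.val < p.2.val ∧ (G.σO p.1).val < (x p.2).val).card := by
  rw [ptSet, Omark, Icount_image (mark_inj G.σO) (ptSet_inj x)]
  congr 1
  apply Finset.filter_congr
  intro p _
  exact and_congr q_add_half_lt q_add_half_lt

lemma IcountOO (G : GridDiagram m) :
    Icount (Omark G) (Omark G) =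
      ((Finset.univ ×ˢ Finset.univ).filter fun p : Fin m × Fin m =>
        p.1.val < p.2.val ∧ (G.σO p.1).val < (G.σO p.2).val).card := by
  rw [Omark, Icount_image (mark_inj G.σO) (mark_inj G.σO)]
  congr 1
  apply Finset.filter_congr
  intro p _
  exact and_congr q_add_half_lt_add_half q_add_half_lt_add_half

end Aux15M

section Aux15Card

variable {m : ℕ}

private lemma vne {a b : Fin m} (h : a ≠ b) : a.val ≠ b.val := fun hv => h (Fin.ext hv)

/-- Card identity C1 for `Icount (ptSet x) (Omark G)`. -/
lemma cardC1 {Gp Gm : GridDiagram m} {hr hr' c₂ c₃ : Fin m}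
    (hrow : hr'.val = hr.val + 1) (h23 : c₂.val < c₃.val)
    (hO2 : Gm.σO c₂ = hr') (hO3 : Gm.σO c₃ = hr)
    (hOs : Gp.σO = Gm.σO * Equiv.swap c₂ c₃) (x : Equiv.Perm (Fin m)) :
    ((Finset.univ ×ˢ Finset.univ).filter fun p : Fin m × Fin m =>
        p.1.val ≤ p.2.val ∧ (x p.1).val ≤ (Gm.σO p.2).val).card
      + (if (x⁻¹ hr').val ≤ c₃.val then 1 else 0)
    = ((Finset.univ ×ˢ Finset.univ).filter fun p : Fin m × Fin m =>
        p.1.val ≤ p.2.val ∧ (x p.1).val ≤ (Gp.σO p.2).val).card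
      + (if (x⁻¹ hr').val ≤ c₂.val then 1 else 0) := by
  classical
  have hp2 : Gp.σO c₂ = hr := by
    rw [hOs, Equiv.Perm.mul_apply, Equiv.swap_apply_left, hO3]
  have hp3 : Gp.σO c₃ = hr' := by
    rw [hOs, Equiv.Perm.mul_apply, Equiv.swap_apply_right, hO2]
  have hpc : ∀ c, c ≠ c₂ → c ≠ c₃ → Gp.σO c = Gm.σO c := fun c hc2 hc3 => by
    rw [hOs, Equiv.Perm.mul_apply, Equiv.swap_apply_of_ne_of_ne hc2 hc3]
  set t := x⁻¹ hr' with ht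
  set Sm := (Finset.univ ×ˢ Finset.univ).filter fun p : Fin m × Fin m =>
    p.1.val ≤ p.2.val ∧ (x p.1).val ≤ (Gm.σO p.2).val with hSm
  set Sp := (Finset.univ ×ˢ Finset.univ).filter fun p : Fin m × Fin m =>
    p.1.val ≤ p.2.val ∧ (x p.1).val ≤ (Gp.σO p.2).val with hSp
  have hsd1 : Sm \ Sp = if t.val ≤ c₂.val then {(t, c₂)} else ∅ := by
    ext p
    obtain ⟨u, c⟩ := p
    rw [mem_ite_singleton]
    simp only [hSm, hSp, Finset.mem_sdiff, Finset.mem_filter, Finset.mem_product,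
      Finset.mem_univ, true_and, not_and, Prod.mk.injEq, Fin.ext_iff]
    have hbr := xval_bridge x hr' u
    by_cases hc2 : c = c₂
    · subst hc2
      rw [hO2, hp2]
      omega
    · by_cases hc3 : c = c₃
      · subst hc3
        rw [hO3, hp3]
        have := vne hc2
        omega
      · rw [hpc c hc2 hc3]
        have := vne hc2
        omega
  have hsd2 : Sp \ Sm = if t.val ≤ c₃.val then {(t, c₃)} else ∅ := by
    ext p
    obtain ⟨u, c⟩ := p
    rw [mem_ite_singleton]
    simp only [hSm, hSp, Finset.mem_sdiff, Finset.mem_filter, Finset.mem_product,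
      Finset.mem_univ, true_and, not_and, Prod.mk.injEq, Fin.ext_iff]
    have hbr := xval_bridge x hr' u
    by_cases hc2 : c = c₂
    · subst hc2
      rw [hO2, hp2]
      omega
    · by_cases hc3 : c = c₃
      · subst hc3
        rw [hO3, hp3]
        omega
      · rw [hpc c hc2 hc3]
        have := vne hc3
        omega
  have hun : (Sp \ Sm).card + Sm.card = (Sm \ Sp).card + Sp.card := by
    rw [Finset.card_sdiff_add_card, Finset.card_sdiff_add_card, Finset.union_comm]
  rw [hsd1, hsd2] at hun
  by_cases h1 : t.val ≤ c₂.val <;> by_cases h2 : t.val ≤ c₃.val <;>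
    simp [h1, h2] at hun ⊢ <;> omega

/-- Card identity C2 for `Icount (Omark G) (ptSet x)`. -/
lemma cardC2 {Gp Gm : GridDiagram m} {hr hr' c₂ c₃ : Fin m}
    (hrow : hr'.val = hr.val + 1) (h23 : c₂.val < c₃.val)
    (hO2 : Gm.σO c₂ = hr') (hO3 : Gm.σO c₃ = hr)
    (hOs : Gp.σO = Gm.σO * Equiv.swap c₂ c₃) (x : Equiv.Perm (Fin m)) :
    ((Finset.univ ×ˢ Finset.univ).filter fun p : Fin m × Fin m =>
        p.1.val < p.2.val ∧ (Gm.σO p.1).val < (x p.2).val).card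
      + (if c₂.val < (x⁻¹ hr').val then 1 else 0)
    = ((Finset.univ ×ˢ Finset.univ).filter fun p : Fin m × Fin m =>
        p.1.val < p.2.val ∧ (Gp.σO p.1).val < (x p.2).val).card
      + (if c₃.val < (x⁻¹ hr').val then 1 else 0) := by
  classical
  have hp2 : Gp.σO c₂ = hr := by
    rw [hOs, Equiv.Perm.mul_apply, Equiv.swap_apply_left, hO3]
  have hp3 : Gp.σO c₃ = hr' := by
    rw [hOs, Equiv.Perm.mul_apply, Equiv.swap_apply_right, hO2]
  have hpc : ∀ c, c ≠ c₂ → c ≠ c₃ → Gp.σO c = Gm.σO c := fun c hc2 hc3 => by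
    rw [hOs, Equiv.Perm.mul_apply, Equiv.swap_apply_of_ne_of_ne hc2 hc3]
  set t := x⁻¹ hr' with ht
  set Sm := (Finset.univ ×ˢ Finset.univ).filter fun p : Fin m × Fin m =>
    p.1.val < p.2.val ∧ (Gm.σO p.1).val < (x p.2).val with hSm
  set Sp := (Finset.univ ×ˢ Finset.univ).filter fun p : Fin m × Fin m =>
    p.1.val < p.2.val ∧ (Gp.σO p.1).val < (x p.2).val with hSp
  have hsd1 : Sm \ Sp = if c₃.val < t.val then {(c₃, t)} else ∅ := by
    ext p
    obtain ⟨c, u⟩ := p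
    rw [mem_ite_singleton]
    simp only [hSm, hSp, Finset.mem_sdiff, Finset.mem_filter, Finset.mem_product,
      Finset.mem_univ, true_and, not_and, Prod.mk.injEq, Fin.ext_iff]
    have hbr := xval_bridge x hr' u
    by_cases hc2 : c = c₂
    · subst hc2
      rw [hO2, hp2]
      omega
    · by_cases hc3 : c = c₃
      · subst hc3
        rw [hO3, hp3]
        omega
      · rw [hpc c hc2 hc3]
        have := vne hc3
        omega
  have hsd2 : Sp \ Sm = if c₂.val < t.val then {(c₂, t)} else ∅ := by
    ext p
    obtain ⟨c, u⟩ := p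
    rw [mem_ite_singleton]
    simp only [hSm, hSp, Finset.mem_sdiff, Finset.mem_filter, Finset.mem_product,
      Finset.mem_univ, true_and, not_and, Prod.mk.injEq, Fin.ext_iff]
    have hbr := xval_bridge x hr' u
    by_cases hc2 : c = c₂
    · subst hc2
      rw [hO2, hp2]
      omega
    · by_cases hc3 : c = c₃
      · subst hc3
        rw [hO3, hp3]
        have := vne hc2
        omega
      · rw [hpc c hc2 hc3]
        have := vne hc2
        omega
  have hun : (Sp \ Sm).card + Sm.card = (Sm \ Sp).card + Sp.card := by
    rw [Finset.card_sdiff_add_card, Finset.card_sdiff_add_card, Finset.union_comm]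
  rw [hsd1, hsd2] at hun
  by_cases h1 : c₂.val < t.val <;> by_cases h2 : c₃.val < t.val <;>
    simp [h1, h2] at hun ⊢ <;> omega

/-- Card identity C3 for `Icount (Omark G) (Omark G)`. -/
lemma cardC3 {Gp Gm : GridDiagram m} {hr hr' c₂ c₃ : Fin m}
    (hrow : hr'.val = hr.val + 1) (h23 : c₂.val < c₃.val)
    (hO2 : Gm.σO c₂ = hr') (hO3 : Gm.σO c₃ = hr)
    (hOs : Gp.σO = Gm.σO * Equiv.swap c₂ c₃) :
    ((Finset.univ ×ˢ Finset.univ).filter fun p : Fin m × Fin m =>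
        p.1.val < p.2.val ∧ (Gp.σO p.1).val < (Gp.σO p.2).val).card
    = ((Finset.univ ×ˢ Finset.univ).filter fun p : Fin m × Fin m =>
        p.1.val < p.2.val ∧ (Gm.σO p.1).val < (Gm.σO p.2).val).card + 1 := by
  classical
  have hp2 : Gp.σO c₂ = hr := by
    rw [hOs, Equiv.Perm.mul_apply, Equiv.swap_apply_left, hO3]
  have hp3 : Gp.σO c₃ = hr' := by
    rw [hOs, Equiv.Perm.mul_apply, Equiv.swap_apply_right, hO2]
  have hpc : ∀ c, c ≠ c₂ → c ≠ c₃ → Gp.σO c = Gm.σO c := fun c hc2 hc3 => by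
    rw [hOs, Equiv.Perm.mul_apply, Equiv.swap_apply_of_ne_of_ne hc2 hc3]
  have hinj : ∀ c, c ≠ c₂ → c ≠ c₃ →
      (Gm.σO c).val ≠ hr.val ∧ (Gm.σO c).val ≠ hr'.val := by
    intro c hc2 hc3
    constructor
    · intro hv
      exact hc3 (Gm.σO.injective (by rw [hO3]; exact Fin.ext hv))
    · intro hv
      exact hc2 (Gm.σO.injective (by rw [hO2]; exact Fin.ext hv))
  have hnotmem : (c₂, c₃) ∉ (Finset.univ ×ˢ Finset.univ).filter
      (fun p : Fin m × Fin m => p.1.val < p.2.val ∧ (Gm.σO p.1).val < (Gm.σO p.2).val) := by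
    simp only [Finset.mem_filter, Finset.mem_product, Finset.mem_univ, true_and]
    rw [hO2, hO3]
    omega
  have hins : (Finset.univ ×ˢ Finset.univ).filter
      (fun p : Fin m × Fin m => p.1.val < p.2.val ∧ (Gp.σO p.1).val < (Gp.σO p.2).val)
      = insert (c₂, c₃) ((Finset.univ ×ˢ Finset.univ).filter
        (fun p : Fin m × Fin m => p.1.val < p.2.val ∧ (Gm.σO p.1).val < (Gm.σO p.2).val)) := by
    ext p
    obtain ⟨c, c'⟩ := p
    simp only [Finset.mem_insert, Finset.mem_filter, Finset.mem_product,
      Finset.mem_univ, true_and, Prod.mk.injEq, Fin.ext_iff]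
    by_cases hc2 : c = c₂
    · rw [hc2, hp2, hO2]
      by_cases hc2' : c' = c₂
      · rw [hc2', hp2, hO2]; omega
      · by_cases hc3' : c' = c₃
        · rw [hc3', hp3, hO3]; omega
        · rw [hpc c' hc2' hc3']
          have h1 := hinj c' hc2' hc3'
          have h2 := vne hc3'
          omega
    · by_cases hc3 : c = c₃
      · rw [hc3, hp3, hO3]
        by_cases hc2' : c' = c₂
        · rw [hc2', hp2, hO2]
          have h2 := vne hc2
          omega
        · by_cases hc3' : c' = c₃
          · rw [hc3', hp3, hO3]
            have h2 := vne hc2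
            omega
          · rw [hpc c' hc2' hc3']
            have h1 := hinj c' hc2' hc3'
            have h2 := vne hc2
            omega
      · rw [hpc c hc2 hc3]
        have hvc2 := vne hc2
        have hvc3 := vne hc3
        have hvc := hinj c hc2 hc3
        by_cases hc2' : c' = c₂
        · rw [hc2', hp2, hO2]; omega
        · by_cases hc3' : c' = c₃
          · rw [hc3', hp3, hO3]; omega
          · rw [hpc c' hc2' hc3']
            omega
  rw [hins, Finset.card_insert_of_notMem hnotmem]

/-- Maslov degree shift for good states. -/
lemma maslov_good {Gp Gm : GridDiagram m} {hr hr' c₂ c₃ : Fin m}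
    (hrow : hr'.val = hr.val + 1) (h23 : c₂.val < c₃.val)
    (hO2 : Gm.σO c₂ = hr') (hO3 : Gm.σO c₃ = hr)
    (hOs : Gp.σO = Gm.σO * Equiv.swap c₂ c₃) {x : Equiv.Perm (Fin m)}
    (hgx : ¬(c₂.val < (x⁻¹ hr').val ∧ (x⁻¹ hr').val ≤ c₃.val)) :
    MaslovO Gm x = MaslovO Gp x - 1 := by
  have hC1 := cardC1 hrow h23 hO2 hO3 hOs x
  have hC2 := cardC2 hrow h23 hO2 hO3 hOs x
  have hC3 := cardC3 (Gp := Gp) (Gm := Gm) hrow h23 hO2 hO3 hOs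
  have e1 : ((Finset.univ ×ˢ Finset.univ).filter fun p : Fin m × Fin m =>
        p.1.val ≤ p.2.val ∧ (x p.1).val ≤ (Gm.σO p.2).val).card
      = ((Finset.univ ×ˢ Finset.univ).filter fun p : Fin m × Fin m =>
        p.1.val ≤ p.2.val ∧ (x p.1).val ≤ (Gp.σO p.2).val).card := by
    split_ifs at hC1 <;> omega
  have e2 : ((Finset.univ ×ˢ Finset.univ).filter fun p : Fin m × Fin m =>
        p.1.val < p.2.val ∧ (Gm.σO p.1).val < (x p.2).val).card
      = ((Finset.univ ×ˢ Finset.univ).filter fun p : Fin m × Fin m =>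
        p.1.val < p.2.val ∧ (Gp.σO p.1).val < (x p.2).val).card := by
    split_ifs at hC2 <;> omega
  simp only [MaslovO, Jcount]
  rw [IcountXO Gm x, IcountXO Gp x, IcountOX Gm x, IcountOX Gp x, IcountOO Gm, IcountOO Gp]
  rw [e1, e2, hC3]
  push_cast
  ring

end Aux15Card

section Aux15Cyc

open Equiv Equiv.Perm

variable {α : Type*} [DecidableEq α] [Fintype α]

/-- If `a` and `b` are not in the same cycle of `σ`, they are in the same cycle of
`σ * swap a b` (merge direction). -/
lemma sameCycle_mul_swap_of_not_sameCycle {σ : Perm α} {a b : α}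
    (hab : a ≠ b) (hn : ¬ σ.SameCycle a b) : (σ * Equiv.swap a b).SameCycle a b := by
  set τ := σ * Equiv.swap a b with hτ
  have hτb : τ b = σ a := by simp [hτ, Equiv.Perm.mul_apply]
  -- minimal positive n with σ^n a = a
  have hex : ∃ n : ℕ, 0 < n ∧ (σ ^ n) a = a := by
    refine ⟨orderOf σ, orderOf_pos σ, by simp [pow_orderOf_eq_one]⟩
  classical
  let n := Nat.find hex
  have hn0 : 0 < n ∧ (σ ^ n) a = a := Nat.find_spec hex
  have hmin : ∀ k, 0 < k → k < n → (σ ^ k) a ≠ a := by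
    intro k hk1 hk2 hk3
    exact Nat.find_min hex hk2 ⟨hk1, hk3⟩
  have key : ∀ k : ℕ, k + 1 ≤ n → (τ ^ (k+1)) b = (σ ^ (k+1)) a := by
    intro k
    induction k with
    | zero => intro _; simpa using hτb
    | succ k ih =>
      intro hk
      have ih' := ih (by omega)
      have h1 : (τ ^ (k+2)) b = τ ((τ ^ (k+1)) b) := by
        rw [pow_succ' τ (k+1)]; rfl
      rw [h1, ih']
      set y := (σ ^ (k+1)) a with hy
      have hya : y ≠ a := hmin (k+1) (by omega) (by omega)
      have hyb : y ≠ b := by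
        intro hyb
        exact hn ⟨(k+1 : ℕ), by exact_mod_cast hyb⟩
      have : τ y = σ y := by
        simp [hτ, Equiv.Perm.mul_apply, Equiv.swap_apply_of_ne_of_ne hya hyb]
      rw [this, hy, ← Equiv.Perm.mul_apply, ← pow_succ']
  have hfin : (τ ^ n) b = a := by
    obtain ⟨k, hk⟩ : ∃ k, n = k + 1 := ⟨n - 1, by omega⟩
    rw [hk] at hn0 ⊢
    rw [key k (by omega)]
    exact hn0.2
  exact Equiv.Perm.SameCycle.symm ⟨(n : ℤ), by exact_mod_cast hfin⟩

/-- Split direction: if `a` and `b` are in the same cycle of `σ`, multiplying by the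
swap increases the number of cycles by one. -/
lemma card_cycleFactors_mul_swap_of_sameCycle {σ : Perm α} {a b : α}
    (hab : a ≠ b) (hσ : ∀ x, σ x ≠ x) (hτ : ∀ x, (σ * Equiv.swap a b) x ≠ x)
    (hs : σ.SameCycle a b) :
    (σ * Equiv.swap a b).cycleFactorsFinset.card = σ.cycleFactorsFinset.card + 1 := by
  classical
  set τ := σ * Equiv.swap a b with hτdef
  have ha : a ∈ σ.support := mem_support.2 (hσ a)
  have hb : b ∈ σ.support := mem_support.2 (hσ b)
  set c := σ.cycleOf a with hc
  have hcmem : c ∈ σ.cycleFactorsFinset := cycleOf_mem_cycleFactorsFinset_iff.2 ha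
  have hacs : a ∈ c.support := mem_support_cycleOf_iff.2 ⟨SameCycle.refl _ _, ha⟩
  have hbcs : b ∈ c.support := mem_support_cycleOf_iff.2 ⟨hs, ha⟩
  set d := σ * c⁻¹ with hd
  have hdisj : d.Disjoint c := disjoint_mul_inv_of_mem_cycleFactorsFinset hcmem
  set e := c * Equiv.swap a b with he
  have hτde : τ = d * e := by
    rw [hτdef, hd, he]; group
  -- support e ⊆ support c
  have hse : e.support ⊆ c.support := by
    intro x hx
    have := Equiv.Perm.support_mul_le c (Equiv.swap a b) hx
    rcases Finset.mem_union.1 this with h | h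
    · exact h
    · rw [Equiv.Perm.support_swap hab] at h
      rcases Finset.mem_insert.1 h with rfl | h
      · exact hacs
      · rw [Finset.mem_singleton] at h; subst h; exact hbcs
  -- e has no fixed points on support c
  have hefix : ∀ x ∈ c.support, e x ≠ x := by
    intro x hx hex
    have hdx : d x = x := by
      rcases hdisj x with h | h
      · exact h
      · exact absurd h (mem_support.1 hx)
    have : τ x = x := by rw [hτde, Equiv.Perm.mul_apply, hex, hdx]
    exact hτ x this
  have hsupp : e.support = c.support := by
    apply Finset.Subset.antisymm hse
    intro x hx; exact mem_support.2 (hefix x hx)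
  -- disjointness of d and e
  have hdisj' : d.Disjoint e := by
    rw [Equiv.Perm.disjoint_iff_disjoint_support, hsupp]
    exact (Equiv.Perm.disjoint_iff_disjoint_support.1 hdisj)
  -- orbit claim
  have hccyc : c.IsCycle := isCycle_cycleOf σ (hσ a)
  have horb : ∀ k : ℕ, e.SameCycle a ((c ^ k) a) ∨ e.SameCycle b ((c ^ k) a) := by
    intro k
    induction k with
    | zero => exact Or.inl (by simpa using Equiv.Perm.SameCycle.refl e a)
    | succ k ih =>
      have hstep : (c ^ (k+1)) a = c ((c ^ k) a) := by
        rw [pow_succ' c k]; rfl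
      set y := (c ^ k) a with hy
      by_cases hya : y = a
      · right
        have : e b = (c ^ (k+1)) a := by
          rw [hstep, hya, he, Equiv.Perm.mul_apply, Equiv.swap_apply_right]
        exact this ▸ ⟨1, by simp⟩
      · by_cases hyb : y = b
        · left
          have : e a = (c ^ (k+1)) a := by
            rw [hstep, hyb, he, Equiv.Perm.mul_apply, Equiv.swap_apply_left]
          exact this ▸ ⟨1, by simp⟩
        · have : e y = (c ^ (k+1)) a := by
            rw [hstep, he, Equiv.Perm.mul_apply, Equiv.swap_apply_of_ne_of_ne hya hyb]
          rcases ih with h | h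
          · exact Or.inl (h.trans (this ▸ ⟨1, by simp⟩))
          · exact Or.inr (h.trans (this ▸ ⟨1, by simp⟩))
  have horb' : ∀ x ∈ e.support, e.SameCycle a x ∨ e.SameCycle b x := by
    intro x hx
    have hxc : x ∈ c.support := hse hx
    have hsc : σ.SameCycle a x := (mem_support_cycleOf_iff.1 hxc).1
    obtain ⟨i, _, _, hi⟩ := hsc.exists_pow_eq σ
    have : (c ^ i) a = x := by rw [hc, cycleOf_pow_apply_self, hi]
    exact this ▸ horb i
  -- cycleFactorsFinset e ⊆ {cycleOf e a, cycleOf e b}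
  have hsub : e.cycleFactorsFinset ⊆ {e.cycleOf a, e.cycleOf b} := by
    intro f hf
    have hfc : f.IsCycle := (mem_cycleFactorsFinset_iff.1 hf).1
    obtain ⟨x, hx, -⟩ := hfc
    have hxf : x ∈ f.support := mem_support.2 hx
    have hxe : x ∈ e.support := mem_cycleFactorsFinset_support_le hf hxf
    have hfeq : f = e.cycleOf x := cycle_is_cycleOf hxf hf
    rcases horb' x hxe with h | h
    · rw [hfeq, ← h.cycleOf_eq]; exact Finset.mem_insert_self _ _
    · rw [hfeq, ← h.cycleOf_eq]
      exact Finset.mem_insert_of_mem (Finset.mem_singleton_self _)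
  have hcard2 : e.cycleFactorsFinset.card ≤ 2 := by
    calc e.cycleFactorsFinset.card ≤ ({e.cycleOf a, e.cycleOf b} : Finset (Perm α)).card :=
          Finset.card_le_card hsub
      _ ≤ 2 := Finset.card_insert_le _ _ |>.trans (by simp)
  have hcard1 : 1 ≤ e.cycleFactorsFinset.card := by
    rcases Finset.eq_empty_or_nonempty e.cycleFactorsFinset with h | h
    · exfalso
      have : e = 1 := cycleFactorsFinset_eq_empty_iff.1 h
      exact hefix a hacs (by rw [this]; rfl)
    · exact Finset.card_pos.2 h
  -- parity via sign
  have hsigne : Equiv.Perm.sign e = - Equiv.Perm.sign c := by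
    rw [he, Equiv.Perm.sign_mul, Equiv.Perm.sign_swap hab, mul_neg_one]
  have hkeven : Even (Multiset.card e.cycleType) := by
    have h1 := Equiv.Perm.sign_of_cycleType e
    have h2 := Equiv.Perm.sign_of_cycleType c
    rw [hccyc.cycleType] at h2
    have hsum_e : e.cycleType.sum = c.support.card := by
      rw [Equiv.Perm.sum_cycleType, hsupp]
    rw [h1, hsum_e] at hsigne
    have h2' : Equiv.Perm.sign c = (-1 : ℤˣ) ^ (c.support.card + 1) := by
      simpa using h2
    rw [h2'] at hsigne
    have h3 : ((-1 : ℤˣ)) ^ (c.support.card + Multiset.card e.cycleType)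
        = (-1) ^ c.support.card := by
      rw [hsigne, pow_succ, mul_neg_one, neg_neg]
    rw [pow_add] at h3
    have hcan : ((-1 : ℤˣ)) ^ (Multiset.card e.cycleType) = 1 :=
      mul_left_cancel (h3.trans (mul_one _).symm)
    exact (neg_one_pow_eq_one_iff_even (by decide)).1 hcan
  have hcardfac : Multiset.card e.cycleType = e.cycleFactorsFinset.card := by
    rw [Equiv.Perm.cycleType_def, Multiset.card_map]; rfl
  have hcard : e.cycleFactorsFinset.card = 2 := by
    rw [hcardfac] at hkeven
    obtain ⟨r, hr⟩ := hkeven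
    omega
  -- assemble
  have hfd : d.cycleFactorsFinset = σ.cycleFactorsFinset \ {c} :=
    cycleFactorsFinset_mul_inv_mem_eq_sdiff hcmem
  have hτfac : τ.cycleFactorsFinset = d.cycleFactorsFinset ∪ e.cycleFactorsFinset := by
    rw [hτde]; exact hdisj'.cycleFactorsFinset_mul_eq_union
  have hdisjfac := hdisj'.disjoint_cycleFactorsFinset
  have hdcard : d.cycleFactorsFinset.card = σ.cycleFactorsFinset.card - 1 := by
    rw [hfd, Finset.card_sdiff_of_subset (by simpa using hcmem)]; simp
  have hσpos : 1 ≤ σ.cycleFactorsFinset.card := by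
    rcases Finset.eq_empty_or_nonempty σ.cycleFactorsFinset with h | h
    · exact absurd (cycleFactorsFinset_eq_empty_iff.1 h ▸ rfl) (hσ a)
    · exact Finset.card_pos.2 h
  rw [hτfac, Finset.card_union_of_disjoint hdisjfac, hdcard, hcard]
  omega

/-- Multiplying a fixed-point-free permutation by a transposition (staying fixed-point
free) changes the number of cycles by exactly one. -/
lemma card_cycleType_mul_swap {σ : Perm α} {a b : α}
    (hab : a ≠ b) (hσ : ∀ x, σ x ≠ x) (hτ : ∀ x, (σ * Equiv.swap a b) x ≠ x) :
    Multiset.card (σ * Equiv.swap a b).cycleType = Multiset.card σ.cycleType + 1 ∨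
    Multiset.card σ.cycleType = Multiset.card (σ * Equiv.swap a b).cycleType + 1 := by
  classical
  have hcardfac : ∀ f : Perm α, Multiset.card f.cycleType = f.cycleFactorsFinset.card := by
    intro f; rw [Equiv.Perm.cycleType_def, Multiset.card_map]; rfl
  rw [hcardfac, hcardfac]
  by_cases hs : σ.SameCycle a b
  · exact Or.inl (card_cycleFactors_mul_swap_of_sameCycle hab hσ hτ hs)
  · right
    set τ := σ * Equiv.swap a b with hτdef
    have hback : τ * Equiv.swap a b = σ := by
      rw [hτdef]; rw [mul_assoc, Equiv.swap_mul_self, mul_one]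
    have hs' : τ.SameCycle a b := sameCycle_mul_swap_of_not_sameCycle hab hs
    have := card_cycleFactors_mul_swap_of_sameCycle hab hτ (by rw [hback]; exact hσ) hs'
    rw [hback] at this
    exact this

end Aux15Cyc

end Grid

set_option maxHeartbeats 1000000 in
open Grid in
/-- If `𝔾₊` is obtained from `𝔾₋` by an O swap, then there is
an `F₂`-linear chain map `𝒫_O : 𝒢̃C(𝔾₊) → 𝒢̃C(𝔾₋)`, homogeneous of Maslov
degree `−1`, with `𝒫_O(F_j) ⊆ F_{j−s}` for all `j`, where
`s = (ℓ(𝔾₊) − ℓ(𝔾₋) + 1)/2 ∈ {0, 1}`, and `𝒫_O(x^±(𝔾₊)) = x^±(𝔾₋)`. -/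
theorem statement15 {m : ℕ} (Gp Gm : GridDiagram m) (h : OSwap Gp Gm) :
    (((numComp Gp : ℚ) - (numComp Gm : ℚ) + 1) / 2 = 0 ∨
      ((numComp Gp : ℚ) - (numComp Gm : ℚ) + 1) / 2 = 1) ∧
    ∃ P : GC m →ₗ[ZMod 2] GC m,
      P.comp (delta Gp) = (delta Gm).comp P ∧
      (∀ d : ℚ, (MaslovPart Gp d).map P ≤ MaslovPart Gm (d - 1)) ∧
      (∀ j : ℚ, (Filt Gp j).map P ≤
        Filt Gm (j - ((numComp Gp : ℚ) - (numComp Gm : ℚ) + 1) / 2)) ∧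
      P (Finsupp.single (xplus Gp) 1) = Finsupp.single (xplus Gm) 1 ∧
      P (Finsupp.single (xminus Gp) 1) = Finsupp.single (xminus Gm) 1 := by
  classical
  obtain ⟨hrw, hrw', c₁, c₂, c₃, c₄, hrow, h12, h23, h34, hgap, hXeq, hX1, hX4, hO2, hO3,
    hOs⟩ := h
  obtain ⟨n, rfl⟩ : ∃ n, m = n + 1 := ⟨m - 1, by have := c₂.pos; omega⟩
  have h12v : c₁.val < c₂.val := Fin.lt_def.mp h12
  have h23v : c₂.val < c₃.val := Fin.lt_def.mp h23
  have h34v : c₃.val < c₄.val := Fin.lt_def.mp h34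
  have hc23 : c₂ ≠ c₃ := ne_of_lt h23
  -- fixed-point-free permutations
  have hfpf_m : ∀ z, (Gm.σX⁻¹ * Gm.σO) z ≠ z := by
    intro z hz
    have h2 : Gm.σO z = Gm.σX z := by
      have h3 := congrArg Gm.σX hz
      rwa [Equiv.Perm.mul_apply, Equiv.Perm.apply_inv_self] at h3
    exact Gm.ne z h2
  have hrel : Gp.σX⁻¹ * Gp.σO = Gm.σX⁻¹ * Gm.σO * Equiv.swap c₂ c₃ := by
    rw [hXeq, hOs, mul_assoc]
  have hfpf_p : ∀ z, (Gm.σX⁻¹ * Gm.σO * Equiv.swap c₂ c₃) z ≠ z := by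
    intro z hz
    rw [← hrel] at hz
    have h2 : Gp.σO z = Gp.σX z := by
      have h3 := congrArg Gp.σX hz
      rwa [Equiv.Perm.mul_apply, Equiv.Perm.apply_inv_self] at h3
    exact Gp.ne z h2
  have hkey := card_cycleType_mul_swap hc23 hfpf_m hfpf_p
  have hnum_p : numComp Gp
      = Multiset.card (Gm.σX⁻¹ * Gm.σO * Equiv.swap c₂ c₃).cycleType := by
    rw [numComp, hrel]
  have hnum_m : numComp Gm = Multiset.card (Gm.σX⁻¹ * Gm.σO).cycleType := rfl
  have hfirst : (((numComp Gp : ℚ) - (numComp Gm : ℚ) + 1) / 2 = 0 ∨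
      ((numComp Gp : ℚ) - (numComp Gm : ℚ) + 1) / 2 = 1) := by
    rcases hkey with hk | hk
    · right
      rw [hnum_p, hnum_m, hk]
      push_cast
      ring
    · left
      have hk2 : (numComp Gm : ℚ) = (numComp Gp : ℚ) + 1 := by
        rw [hnum_p, hnum_m, hk]
        push_cast
        ring
      rw [hk2]
      ring
  -- the pinch map
  set bad : Equiv.Perm (Fin (n+1)) → Prop := fun z =>
    c₂.val < (z⁻¹ hrw').val ∧ (z⁻¹ hrw').val ≤ c₃.val with hbad
  set P : GC (n+1) →ₗ[ZMod 2] GC (n+1) := Finsupp.lsum (ZMod 2) (fun x =>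
    LinearMap.toSpanSingleton (ZMod 2) (GC (n+1))
      (if bad x then 0 else Finsupp.single x 1)) with hP
  have hPsingle : ∀ x, P (Finsupp.single x 1)
      = if bad x then 0 else Finsupp.single x 1 := by
    intro x
    rw [hP, Finsupp.lsum_single, LinearMap.toSpanSingleton_apply, one_smul]
  have hdelta : ∀ (G : GridDiagram (n+1)) (x), delta G (Finsupp.single x 1)
      = ∑ y : Equiv.Perm (Fin (n+1)), (countDRect G x y : ZMod 2) • Finsupp.single y 1 := by
    intro G x
    rw [delta, Finsupp.lsum_single, LinearMap.toSpanSingleton_apply, one_smul]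
  -- countDRect comparison lemmas
  have hcd1 : ∀ x y, ¬ bad x → ¬ bad y → countDRect Gp x y = countDRect Gm x y := by
    intro x y hgx hgy
    apply Nat.card_congr
    apply Equiv.subtypeEquivRight
    intro r
    have hiff : ∀ hE : r ∈ ERect x y, (countO Gp r = 0 ↔ countO Gm r = 0) := fun hE =>
      rect_countO_congr hrow h23v hO2 hO3 hOs hgx hgy hE.1
    constructor
    · rintro ⟨hE, hcz⟩
      exact ⟨hE, (hiff hE).1 hcz⟩
    · rintro ⟨hE, hcz⟩
      exact ⟨hE, (hiff hE).2 hcz⟩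
  have hcd2 : ∀ x y, ¬ bad x → bad y → countDRect Gm x y = 0 := by
    intro x y hgx hby
    have hie : IsEmpty {r : Finset (Fin (n+1) × Fin (n+1)) //
        r ∈ ERect x y ∧ countO Gm r = 0} := by
      constructor
      rintro ⟨r, hE, hcz⟩
      exact rect_countOm_ne_zero hrow h23v hO2 hO3 hgx hby hE.1 hcz
    rw [countDRect]
    exact Nat.card_of_isEmpty
  have hcd3 : ∀ x y, bad x → ¬ bad y → countDRect Gp x y = 0 := by
    intro x y hbx hgy
    have hie : IsEmpty {r : Finset (Fin (n+1) × Fin (n+1)) //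
        r ∈ ERect x y ∧ countO Gp r = 0} := by
      constructor
      rintro ⟨r, hE, hcz⟩
      exact rect_countOp_ne_zero hrow h23v hO2 hO3 hOs hbx hgy hE.1 hcz
    rw [countDRect]
    exact Nat.card_of_isEmpty
  -- chain map property
  have hchain : P.comp (delta Gp) = (delta Gm).comp P := by
    apply Finsupp.lhom_ext'
    intro x
    apply LinearMap.ext_ring
    simp only [LinearMap.comp_apply, Finsupp.lsingle_apply]
    rw [hdelta Gp x, hPsingle x, map_sum]
    by_cases hbx : bad x
    · rw [if_pos hbx, map_zero]
      apply Finset.sum_eq_zero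
      intro y _
      rw [map_smul, hPsingle y]
      by_cases hby : bad y
      · rw [if_pos hby, smul_zero]
      · rw [hcd3 x y hbx hby, Nat.cast_zero, zero_smul]
    · rw [if_neg hbx, hdelta Gm x]
      apply Finset.sum_congr rfl
      intro y _
      rw [map_smul, hPsingle y]
      by_cases hby : bad y
      · rw [if_pos hby, hcd2 x y hbx hby, Nat.cast_zero, zero_smul, smul_zero]
      · rw [if_neg hby, hcd1 x y hbx hby]
  -- Maslov homogeneity
  have hMas : ∀ d : ℚ, (MaslovPart Gp d).map P ≤ MaslovPart Gm (d - 1) := by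
    intro d
    rw [MaslovPart, Submodule.map_span, Submodule.span_le]
    rintro _ ⟨f, ⟨x, hMx, rfl⟩, rfl⟩
    rw [SetLike.mem_coe, hPsingle x]
    by_cases hbx : bad x
    · rw [if_pos hbx]
      exact (MaslovPart Gm (d-1)).zero_mem
    · rw [if_neg hbx]
      apply Submodule.subset_span
      exact ⟨x, by rw [maslov_good hrow h23v hO2 hO3 hOs hbx, hMx], rfl⟩
  -- filtration
  have hAlex : ∀ x : Equiv.Perm (Fin (n+1)), ¬ bad x →
      Alex Gm x = Alex Gp x - ((numComp Gp : ℚ) - (numComp Gm : ℚ) + 1) / 2 := by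
    intro x hbx
    have hM := maslov_good hrow h23v hO2 hO3 hOs hbx
    have hMX : MaslovX Gm x = MaslovX Gp x := by
      rw [MaslovX, MaslovX, Xmark, Xmark, hXeq]
    rcases hkey with hk | hk
    · have hkq : (numComp Gp : ℚ) = (numComp Gm : ℚ) + 1 := by
        rw [hnum_p, hnum_m, hk]; push_cast; ring
      rw [Alex, Alex, hM, hMX, hkq]
      ring
    · have hkq : (numComp Gm : ℚ) = (numComp Gp : ℚ) + 1 := by
        rw [hnum_p, hnum_m, hk]; push_cast; ring
      rw [Alex, Alex, hM, hMX, hkq]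
      ring
  have hFilt : ∀ j : ℚ, (Filt Gp j).map P ≤
      Filt Gm (j - ((numComp Gp : ℚ) - (numComp Gm : ℚ) + 1) / 2) := by
    intro j
    rw [Filt, Submodule.map_span, Submodule.span_le]
    rintro _ ⟨f, ⟨x, hAx, rfl⟩, rfl⟩
    rw [SetLike.mem_coe, hPsingle x]
    by_cases hbx : bad x
    · rw [if_pos hbx]
      exact Submodule.zero_mem _
    · rw [if_neg hbx]
      apply Submodule.subset_span
      exact ⟨x, by rw [hAlex x hbx]; linarith, rfl⟩
  -- canonical states
  have hxm_good : ¬ bad (xminus Gp) := by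
    have ht : (xminus Gp)⁻¹ hrw' = c₁ := by
      rw [xminus, hXeq, ← hX1, Equiv.Perm.inv_apply_self]
    intro hcon
    rw [hbad] at hcon
    simp only [ht] at hcon
    omega
  have hPxm : P (Finsupp.single (xminus Gp) 1) = Finsupp.single (xminus Gm) 1 := by
    rw [hPsingle, if_neg hxm_good]
    have h2 : xminus Gp = xminus Gm := by rw [xminus, xminus, hXeq]
    rw [h2]
  have hrot : finRotate (n+1) hrw = hrw' := by
    rw [finRotate_succ_apply]
    have hlt : hrw < Fin.last n := by
      rw [Fin.lt_def]
      have := hrw'.isLt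
      simp only [Fin.val_last]
      omega
    exact Fin.ext ((Fin.val_add_one_of_lt hlt).trans hrow.symm)
  have htp : (xplus Gp)⁻¹ hrw' = finRotate (n+1) c₄ := by
    rw [xplus, hXeq]
    simp only [mul_inv_rev, inv_inv, Equiv.Perm.mul_apply]
    rw [show (finRotate (n+1))⁻¹ hrw' = hrw from by
      rw [← hrot, Equiv.Perm.inv_apply_self]]
    rw [show Gm.σX⁻¹ hrw = c₄ from by rw [← hX4, Equiv.Perm.inv_apply_self]]
  have hxp_good : ¬ bad (xplus Gp) := by
    intro hcon
    rw [hbad] at hcon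
    simp only [htp, finRotate_succ_apply, Fin.val_add_one] at hcon
    by_cases hlast : c₄ = Fin.last n
    · rw [if_pos hlast] at hcon
      omega
    · rw [if_neg hlast] at hcon
      omega
  have hPxp : P (Finsupp.single (xplus Gp) 1) = Finsupp.single (xplus Gm) 1 := by
    rw [hPsingle, if_neg hxp_good]
    have h2 : xplus Gp = xplus Gm := by rw [xplus, xplus, hXeq]
    rw [h2]
  exact ⟨hfirst, P, hchain, hMas, hFilt, hPxp, hPxm⟩
end
end
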